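/- arXiv:2312.17406 — 4 statements merged into one kernel-verified Lean document; each statement's English description precedes it below -/
import Mathlib

section
/- Assume P_{1i} > 0 for i = 2,…,d. Let q^{(σ)} be a family of sampling probabilities and let q̃_k (k ∈ ℕ) be a family of asymptotic-expansion coefficients for q^{(σ)}. Then the leading coefficient is given explicitly by q̃_0(n) = ∏_{i=2}^d Γ(θP_{1i} + n_i)/Γ(θP_{1i}) for every n ∈ ℕ^d, where Γ denotes the Gamma function. -/
open Finset Filter Asymptotics

noncomputable section

/-- The `i`-th standard unit vector of `ℤ^d`. -/
def stdE {d : ℕ} (i : Fin d) : Fin d → ℤ := fun j => if j = i then 1 else 0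

/-- The total size `‖n‖ = n_1 + ⋯ + n_d` of a configuration. -/
def tot {d : ℕ} (n : Fin d → ℤ) : ℤ := ∑ i, n i

/-- `n ∈ ℕ^d`, i.e. all components of `n : ℤ^d` are nonnegative. -/
def IsNatVec {d : ℕ} (n : Fin d → ℤ) : Prop := ∀ i, 0 ≤ n i

/-- A family of sampling probabilities `q^{(σ)} : ℤ^d → ℝ`, indexed by `σ > 0`:
`q^{(σ)}(0) = 1`; `q^{(σ)}(n) = 0` if `n` has a negative component; the consistency
condition `∑_i q^{(σ)}(n+e_i) = q^{(σ)}(n)` holds on `ℕ^d`; and the sampling recursion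
holds on `ℕ^d ∖ {0}`.  (Allele `1` is represented by the index `0 : Fin d`.) -/
def IsSamplingFamily {d : ℕ} [NeZero d] (θ : ℝ) (P : Fin d → Fin d → ℝ)
    (q : ℝ → (Fin d → ℤ) → ℝ) : Prop :=
  (∀ σ : ℝ, 0 < σ → q σ 0 = 1) ∧
  (∀ σ : ℝ, 0 < σ → ∀ n : Fin d → ℤ, (∃ i, n i < 0) → q σ n = 0) ∧
  (∀ σ : ℝ, 0 < σ → ∀ n : Fin d → ℤ, IsNatVec n →
    ∑ i, q σ (n + stdE i) = q σ n) ∧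
  (∀ σ : ℝ, 0 < σ → ∀ n : Fin d → ℤ, IsNatVec n → n ≠ 0 →
    ((tot n : ℝ) * ((tot n : ℝ) - 1 + θ) + ((tot n : ℝ) - (n 0 : ℝ)) * σ) * q σ n =
      (∑ i, (n i : ℝ) * ((n i : ℝ) - 1) * q σ (n - stdE i))
      + (∑ i, ∑ j, (n i : ℝ) * θ * P j i * q σ (n - stdE i + stdE j))
      + σ * (tot n : ℝ) * ∑ i ∈ univ.erase 0, q σ (n + stdE i))

/-- A family of asymptotic-expansion coefficients `q̃_k : ℤ^d → ℝ` for a family of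
sampling probabilities `q^{(σ)}`:  `q̃_0(0) = 1`, `q̃_k(0) = 0` for `k ≥ 1`,
`q̃_k(n) = 0` if `n` has a negative component, and for every `n ∈ ℕ^d` and `K ∈ ℕ`,
`σ^{‖n‖-n_1} q^{(σ)}(n) - ∑_{k=0}^K q̃_k(n) σ^{-k} = O(σ^{-(K+1)})` as `σ → ∞`. -/
def IsExpansionCoeffs {d : ℕ} [NeZero d] (q : ℝ → (Fin d → ℤ) → ℝ)
    (qt : ℕ → (Fin d → ℤ) → ℝ) : Prop :=
  qt 0 0 = 1 ∧
  (∀ k : ℕ, 1 ≤ k → qt k 0 = 0) ∧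
  (∀ k : ℕ, ∀ n : Fin d → ℤ, (∃ i, n i < 0) → qt k n = 0) ∧
  (∀ n : Fin d → ℤ, IsNatVec n → ∀ K : ℕ,
    (fun σ : ℝ => σ ^ (tot n - n 0) * q σ n
        - ∑ k ∈ range (K + 1), qt k n * σ ^ (-(k : ℤ)))
      =O[atTop] fun σ : ℝ => σ ^ (-(K + 1 : ℤ)))

/-- **Leading coefficient** (eq. (4.9)): if `P_{1i} > 0` for `i = 2,…,d`, the leading
coefficient of the asymptotic expansion of the sampling probability is
`q̃_0(n) = ∏_{i=2}^d Γ(θP_{1i}+n_i)/Γ(θP_{1i})` for every `n ∈ ℕ^d`. -/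
theorem leading_coefficient {d : ℕ} (θ : ℝ) (hθ : 0 < θ)
    (P : Fin (d + 2) → Fin (d + 2) → ℝ)
    (hPnonneg : ∀ i j, 0 ≤ P i j) (hProw : ∀ i, ∑ j, P i j = 1)
    (hP1pos : ∀ i : Fin (d + 2), i ≠ 0 → 0 < P 0 i)
    (q : ℝ → (Fin (d + 2) → ℤ) → ℝ) (qt : ℕ → (Fin (d + 2) → ℤ) → ℝ)
    (hq : IsSamplingFamily θ P q) (hqt : IsExpansionCoeffs q qt)
    (n : Fin (d + 2) → ℤ) (hn : IsNatVec n) :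
    qt 0 n = ∏ i ∈ univ.erase 0,
      Real.Gamma (θ * P 0 i + (n i : ℝ)) / Real.Gamma (θ * P 0 i) := by
  obtain ⟨hq1, hq0, hqc, hqr⟩ := hq
  obtain ⟨hqt1, -, hqtneg, hqtO⟩ := hqt
  -- basic component facts
  have htot : ∀ (m k : Fin (d+2) → ℤ), tot (m + k) = tot m + tot k := by
    intro m k; simp [tot, Finset.sum_add_distrib]
  have htot' : ∀ (m k : Fin (d+2) → ℤ), tot (m - k) = tot m - tot k := by
    intro m k; simp [tot, Finset.sum_sub_distrib]
  have hstot : ∀ i : Fin (d+2), tot (stdE i) = 1 := by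
    intro i; simp [tot, stdE]
  have hstdE : ∀ i j : Fin (d+2), stdE i j = if j = i then 1 else 0 := fun _ _ => rfl
  have htote : ∀ m : Fin (d+2) → ℤ, tot m - m 0 = ∑ i ∈ (univ.erase (0 : Fin (d+2))), m i := by
    intro m
    rw [tot, ← Finset.add_sum_erase _ _ (mem_univ 0)]; ring
  have hexn : ∀ m : Fin (d+2) → ℤ, IsNatVec m → 0 ≤ tot m - m 0 := by
    intro m hm
    rw [htote]
    exact Finset.sum_nonneg fun i _ => hm i
  have hNadd : ∀ (m : Fin (d+2) → ℤ), IsNatVec m → ∀ i, IsNatVec (m + stdE i) := by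
    intro m hm i j; have := hm j
    simp only [Pi.add_apply, hstdE]
    split <;> omega
  have hNsub : ∀ (m : Fin (d+2) → ℤ), IsNatVec m → ∀ i, 1 ≤ m i → IsNatVec (m - stdE i) := by
    intro m hm i hi j; have := hm j
    simp only [Pi.sub_apply, hstdE]
    split
    · rename_i h; subst h; omega
    · omega
  -- exponent computations
  have hexp_add : ∀ (m : Fin (d+2) → ℤ) (i : Fin (d+2)),
      tot (m + stdE i) - (m + stdE i) 0
        = tot m - m 0 + (if i = 0 then 0 else 1) := by
    intro m i
    rw [htot, hstot]
    simp only [Pi.add_apply, hstdE]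
    by_cases hi : i = 0 <;> simp [hi, eq_comm] <;> ring
  have hexp_sub : ∀ (m : Fin (d+2) → ℤ) (i : Fin (d+2)),
      tot (m - stdE i) - (m - stdE i) 0
        = tot m - m 0 - (if i = 0 then 0 else 1) := by
    intro m i
    rw [htot', hstot]
    simp only [Pi.sub_apply, hstdE]
    by_cases hi : i = 0 <;> simp [hi, eq_comm] <;> ring
  -- the basic limit
  have hlim : ∀ m : Fin (d+2) → ℤ, IsNatVec m →
      Tendsto (fun σ : ℝ => σ ^ (tot m - m 0) * q σ m) atTop (nhds (qt 0 m)) := by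
    intro m hm
    have h := hqtO m hm 0
    have h' : (fun σ : ℝ => σ ^ (tot m - m 0) * q σ m - qt 0 m) =O[atTop]
        fun σ : ℝ => σ ^ (-1 : ℤ) := by
      have e1 : ∀ σ : ℝ, σ ^ (tot m - m 0) * q σ m
          - ∑ k ∈ range (0 + 1), qt k m * σ ^ (-(k : ℤ))
          = σ ^ (tot m - m 0) * q σ m - qt 0 m := by
        intro σ; simp
      have e2 : (fun σ : ℝ => σ ^ (-(0 + 1 : ℤ))) = fun σ : ℝ => σ ^ (-1 : ℤ) := by
        norm_num
      rw [← e2]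
      exact h.congr_left e1
    have h0 : Tendsto (fun σ : ℝ => σ ^ (-1 : ℤ)) atTop (nhds (0 : ℝ)) :=
      tendsto_zpow_atTop_zero (by norm_num)
    have h2 := (h'.trans_tendsto h0).add_const (qt 0 m)
    simpa using h2
  have hzero : Tendsto (fun σ : ℝ => σ ^ (-1 : ℤ)) atTop (nhds (0 : ℝ)) :=
    tendsto_zpow_atTop_zero (by norm_num)
  -- generic shifted limit
  have hshift : ∀ (m' : Fin (d+2) → ℤ), IsNatVec m' → ∀ (c : ℝ) (a : ℤ),
      a ≤ tot m' - m' 0 →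
      Tendsto (fun σ : ℝ => σ ^ a * (c * q σ m')) atTop
        (nhds (if a = tot m' - m' 0 then c * qt 0 m' else 0)) := by
    intro m' hm' c a ha
    by_cases heq : a = tot m' - m' 0
    · rw [if_pos heq, heq]
      exact ((hlim m' hm').const_mul c).congr fun σ => by ring
    · rw [if_neg heq]
      have hlt : a - (tot m' - m' 0) < 0 := by omega
      have h1 : Tendsto (fun σ : ℝ => σ ^ (a - (tot m' - m' 0))) atTop (nhds (0:ℝ)) :=
        tendsto_zpow_atTop_zero hlt
      have h2 := (h1.mul (hlim m' hm')).const_mul c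
      have hev : (fun σ : ℝ => c * (σ ^ (a - (tot m' - m' 0))
            * (σ ^ (tot m' - m' 0) * q σ m')))
          =ᶠ[atTop] (fun σ : ℝ => σ ^ a * (c * q σ m')) := by
        filter_upwards [eventually_gt_atTop (0:ℝ)] with σ hσ
        have h3 : σ ^ (a - (tot m' - m' 0)) * (σ ^ (tot m' - m' 0) * q σ m')
            = σ ^ a * q σ m' := by
          rw [← mul_assoc, ← zpow_add₀ (ne_of_gt hσ), sub_add_cancel]
        rw [h3]; ring
      have := h2.congr' hev
      simpa using this
  -- Lemma A : adding e_0 does not change qt 0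
  have hA : ∀ m : Fin (d+2) → ℤ, IsNatVec m → qt 0 (m + stdE (0 : Fin (d+2))) = qt 0 m := by
    intro m hm
    have hm0 : IsNatVec (m + stdE (0 : Fin (d+2))) := hNadd m hm 0
    have he0 : tot (m + stdE (0 : Fin (d+2))) - (m + stdE (0 : Fin (d+2))) 0 = tot m - m 0 := by
      rw [hexp_add]; simp
    have hev : (fun σ : ℝ => σ ^ (tot (m + stdE (0 : Fin (d+2))) - (m + stdE (0 : Fin (d+2))) 0) * q σ (m + stdE (0 : Fin (d+2))))
        =ᶠ[atTop] (fun σ : ℝ => σ ^ (tot m - m 0) * q σ m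
          - ∑ i ∈ (univ.erase (0 : Fin (d+2))),
              σ ^ (-1 : ℤ) * (σ ^ (tot (m + stdE i) - (m + stdE i) 0) * q σ (m + stdE i))) := by
      filter_upwards [eventually_gt_atTop (0 : ℝ)] with σ hσ
      have hσ0 : σ ≠ 0 := ne_of_gt hσ
      have hsplit : q σ (m + stdE (0 : Fin (d+2))) = q σ m - ∑ i ∈ (univ.erase (0 : Fin (d+2))), q σ (m + stdE i) := by
        have h := hqc σ hσ m hm
        rw [← Finset.add_sum_erase _ _ (mem_univ 0)] at h
        linarith
      rw [he0, hsplit, mul_sub, Finset.mul_sum]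
      congr 1
      refine Finset.sum_congr rfl (fun i hi => ?_)
      have hine : i ≠ 0 := (Finset.mem_erase.mp hi).1
      rw [hexp_add, if_neg hine, ← mul_assoc, ← zpow_add₀ hσ0]
      congr 2
      ring
    have h2 : Tendsto (fun σ : ℝ => σ ^ (tot m - m 0) * q σ m
          - ∑ i ∈ (univ.erase (0 : Fin (d+2))),
              σ ^ (-1 : ℤ) * (σ ^ (tot (m + stdE i) - (m + stdE i) 0) * q σ (m + stdE i)))
        atTop (nhds (qt 0 m - ∑ i ∈ (univ.erase (0 : Fin (d+2))), (0 : ℝ))) := by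
      refine Tendsto.sub (hlim m hm) (tendsto_finset_sum _ fun i hi => ?_)
      have := hzero.mul (hlim (m + stdE i) (hNadd m hm i))
      simpa using this
    have := tendsto_nhds_unique (hlim (m + stdE (0 : Fin (d+2))) hm0) (h2.congr' hev.symm)
    simpa using this
  -- Lemma B : limiting recursion
  have hB : ∀ m : Fin (d+2) → ℤ, IsNatVec m → m ≠ 0 →
      ((tot m : ℝ) - (m 0 : ℝ)) * qt 0 m =
        ∑ i ∈ (univ.erase (0 : Fin (d+2))), ((m i : ℝ) * ((m i : ℝ) - 1) * qt 0 (m - stdE i)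
          + (m i : ℝ) * θ * P 0 i * qt 0 (m - stdE i + stdE (0 : Fin (d+2)))) := by
    intro m hm hne
    set e : ℤ := tot m - m 0 with he
    set G : ℝ → ℝ := fun σ => (∑ i, σ ^ (e - 1) * ((m i : ℝ) * ((m i : ℝ) - 1) * q σ (m - stdE i)))
        + ((∑ i, ∑ j, σ ^ (e - 1) * ((m i : ℝ) * θ * P j i * q σ (m - stdE i + stdE j)))
        + ∑ i ∈ (univ.erase (0 : Fin (d+2))), σ ^ (e - 1) * (σ * (tot m : ℝ) * q σ (m + stdE i))) with hG
    -- left limit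
    have hGleft : Tendsto G atTop (nhds (((tot m : ℝ) - (m 0 : ℝ)) * qt 0 m)) := by
      have hev : (fun σ : ℝ =>
          ((tot m : ℝ) * ((tot m : ℝ) - 1 + θ)) * (σ ^ (-1 : ℤ) * (σ ^ e * q σ m))
            + ((tot m : ℝ) - (m 0 : ℝ)) * (σ ^ e * q σ m)) =ᶠ[atTop] G := by
        filter_upwards [eventually_gt_atTop (0 : ℝ)] with σ hσ
        have hσ0 : σ ≠ 0 := ne_of_gt hσ
        have hrec := hqr σ hσ m hm hne
        have hGσ : G σ = σ ^ (e - 1) *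
            ((∑ i, (m i : ℝ) * ((m i : ℝ) - 1) * q σ (m - stdE i))
              + (∑ i, ∑ j, (m i : ℝ) * θ * P j i * q σ (m - stdE i + stdE j))
              + σ * (tot m : ℝ) * ∑ i ∈ (univ.erase (0 : Fin (d+2))), q σ (m + stdE i)) := by
          simp only [hG]
          simp only [mul_add, Finset.mul_sum]
          ring
        rw [hGσ, ← hrec]
        have hz1 : σ ^ e = σ ^ (e - 1) * σ := by
          conv_lhs => rw [show e = (e - 1) + 1 by ring]
          rw [zpow_add_one₀ hσ0]
        have hz2 : σ ^ (-1 : ℤ) = σ⁻¹ := zpow_neg_one σ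
        rw [hz1, hz2]
        field_simp
      have l1 := ((hzero.mul (hlim m hm)).const_mul ((tot m : ℝ) * ((tot m : ℝ) - 1 + θ))).add
        ((hlim m hm).const_mul ((tot m : ℝ) - (m 0 : ℝ)))
      refine Tendsto.congr' hev (by simpa using l1)
    -- right limit
    have T1 : ∀ i : Fin (d+2),
        Tendsto (fun σ : ℝ => σ ^ (e - 1) * ((m i : ℝ) * ((m i : ℝ) - 1) * q σ (m - stdE i)))
          atTop (nhds (if i = 0 then 0
            else (m i : ℝ) * ((m i : ℝ) - 1) * qt 0 (m - stdE i))) := by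
      intro i
      by_cases hmi : m i = 0
      · have hc : (m i : ℝ) * ((m i : ℝ) - 1) = 0 := by rw [hmi]; norm_num
        have : (fun σ : ℝ => σ ^ (e - 1) * ((m i : ℝ) * ((m i : ℝ) - 1) * q σ (m - stdE i)))
            = fun _ => (0:ℝ) := by funext σ; rw [hc]; ring
        rw [this]
        have hv : (if i = 0 then (0:ℝ)
            else (m i : ℝ) * ((m i : ℝ) - 1) * qt 0 (m - stdE i)) = 0 := by
          by_cases hi : i = 0 <;> simp [hi, hc]
        rw [hv]
        exact tendsto_const_nhds
      · have hmi1 : 1 ≤ m i := by have := hm i; omega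
        have hnv := hNsub m hm i hmi1
        have hle : e - 1 ≤ tot (m - stdE i) - (m - stdE i) 0 := by
          rw [hexp_sub]; by_cases hi : i = 0 <;> simp [hi, ← he] <;> omega
        have h := hshift (m - stdE i) hnv ((m i : ℝ) * ((m i : ℝ) - 1)) (e - 1) hle
        by_cases hi : i = 0
        · rw [if_pos hi]
          rw [if_neg (by rw [hexp_sub, hi]; simp <;> omega)] at h
          exact h
        · rw [if_neg hi]
          rw [if_pos (by rw [hexp_sub, if_neg hi]; try ring)] at h
          exact h
    have T2 : ∀ i j : Fin (d+2),
        Tendsto (fun σ : ℝ => σ ^ (e - 1) * ((m i : ℝ) * θ * P j i * q σ (m - stdE i + stdE j)))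
          atTop (nhds (if j = 0 then (if i = 0 then 0
            else (m i : ℝ) * θ * P j i * qt 0 (m - stdE i + stdE j)) else 0)) := by
      intro i j
      by_cases hmi : m i = 0
      · have : (fun σ : ℝ => σ ^ (e - 1) * ((m i : ℝ) * θ * P j i * q σ (m - stdE i + stdE j)))
            = fun _ => (0:ℝ) := by funext σ; rw [hmi]; push_cast; ring
        rw [this]
        have hv : (if j = 0 then (if i = 0 then (0:ℝ)
            else (m i : ℝ) * θ * P j i * qt 0 (m - stdE i + stdE j)) else 0) = 0 := by
          by_cases hj : j = 0 <;> by_cases hi : i = 0 <;> simp [hi, hj, hmi]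
        rw [hv]
        exact tendsto_const_nhds
      · have hmi1 : 1 ≤ m i := by have := hm i; omega
        have hnv := hNadd _ (hNsub m hm i hmi1) j
        have hexp2 : tot (m - stdE i + stdE j) - (m - stdE i + stdE j) 0
            = e - (if i = 0 then 0 else 1) + (if j = 0 then 0 else 1) := by
          rw [hexp_add, hexp_sub, he]
        have hle : e - 1 ≤ tot (m - stdE i + stdE j) - (m - stdE i + stdE j) 0 := by
          rw [hexp2]; by_cases hi : i = 0 <;> by_cases hj : j = 0 <;> simp [hi, hj] <;> omega
        have h := hshift (m - stdE i + stdE j) hnv ((m i : ℝ) * θ * P j i) (e - 1) hle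
        by_cases hi : i = 0 <;> by_cases hj : j = 0
        · rw [if_pos hj, if_pos hi]
          rw [if_neg (by rw [hexp2]; simp [hi, hj] <;> omega)] at h
          exact h
        · rw [if_neg hj]
          rw [if_neg (by rw [hexp2]; simp [hi, hj] <;> omega)] at h
          exact h
        · rw [if_pos hj, if_neg hi]
          rw [if_pos (by rw [hexp2]; simp [hi, hj])] at h
          exact h
        · rw [if_neg hj]
          rw [if_neg (by rw [hexp2]; simp [hi, hj] <;> omega)] at h
          exact h
    have T3 : ∀ i : Fin (d+2), i ∈ univ.erase 0 →
        Tendsto (fun σ : ℝ => σ ^ (e - 1) * (σ * (tot m : ℝ) * q σ (m + stdE i)))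
          atTop (nhds 0) := by
      intro i hi
      have hi0 : i ≠ 0 := (Finset.mem_erase.mp hi).1
      have hle : e ≤ tot (m + stdE i) - (m + stdE i) 0 := by
        rw [hexp_add, if_neg hi0]; omega
      have h := hshift (m + stdE i) (hNadd m hm i) (tot m : ℝ) e hle
      rw [if_neg (by rw [hexp_add, if_neg hi0]; omega)] at h
      refine h.congr' ?_
      filter_upwards [eventually_gt_atTop (0:ℝ)] with σ hσ
      have hz1 : σ ^ e = σ ^ (e - 1) * σ := by
        conv_lhs => rw [show e = (e - 1) + 1 by ring]
        rw [zpow_add_one₀ (ne_of_gt hσ)]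
      rw [hz1]; ring
    have hGright : Tendsto G atTop (nhds
        ((∑ i, (if i = 0 then 0 else (m i : ℝ) * ((m i : ℝ) - 1) * qt 0 (m - stdE i)))
          + ((∑ i, ∑ j, (if j = 0 then (if i = 0 then 0
              else (m i : ℝ) * θ * P j i * qt 0 (m - stdE i + stdE j)) else 0))
            + ∑ i ∈ (univ.erase (0 : Fin (d+2))), (0:ℝ)))) := by
      rw [hG]
      exact (tendsto_finset_sum _ fun i _ => T1 i).add
        ((tendsto_finset_sum _ fun i _ => tendsto_finset_sum _ fun j _ => T2 i j).add
          (tendsto_finset_sum _ T3))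
    have hEq := tendsto_nhds_unique hGleft hGright
    rw [hEq]
    -- simplify the sums of ifs
    have hs1 : (∑ i, (if i = 0 then 0 else (m i : ℝ) * ((m i : ℝ) - 1) * qt 0 (m - stdE i)))
        = ∑ i ∈ (univ.erase (0 : Fin (d+2))), (m i : ℝ) * ((m i : ℝ) - 1) * qt 0 (m - stdE i) := by
      rw [← Finset.add_sum_erase _ _ (mem_univ 0), if_pos rfl, zero_add]
      exact Finset.sum_congr rfl fun i hi => by rw [if_neg (Finset.mem_erase.mp hi).1]
    have hs2 : (∑ i, ∑ j, (if j = 0 then (if i = 0 then (0:ℝ)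
          else (m i : ℝ) * θ * P j i * qt 0 (m - stdE i + stdE j)) else 0))
        = ∑ i ∈ (univ.erase (0 : Fin (d+2))), (m i : ℝ) * θ * P 0 i * qt 0 (m - stdE i + stdE (0 : Fin (d+2))) := by
      have hinner : ∀ i : Fin (d+2), (∑ j, (if j = 0 then (if i = 0 then (0:ℝ)
            else (m i : ℝ) * θ * P j i * qt 0 (m - stdE i + stdE j)) else 0))
          = (if i = 0 then (0:ℝ) else (m i : ℝ) * θ * P 0 i * qt 0 (m - stdE i + stdE (0 : Fin (d+2)))) := by
        intro i
        rw [Finset.sum_ite_eq' univ (0 : Fin (d+2))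
          (fun j => if i = 0 then (0:ℝ) else (m i : ℝ) * θ * P j i * qt 0 (m - stdE i + stdE j))]
        simp
      rw [Finset.sum_congr rfl fun i _ => hinner i]
      rw [← Finset.add_sum_erase _ _ (mem_univ 0), if_pos rfl, zero_add]
      exact Finset.sum_congr rfl fun i hi => by rw [if_neg (Finset.mem_erase.mp hi).1]
    rw [hs1, hs2, Finset.sum_const, smul_zero, add_zero, ← Finset.sum_add_distrib]
  -- The product formula
  set F : (Fin (d+2) → ℤ) → ℝ := fun m => ∏ i ∈ (univ.erase (0 : Fin (d+2))),
      Real.Gamma (θ * P 0 i + (m i : ℝ)) / Real.Gamma (θ * P 0 i) with hF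
  have hGpos : ∀ i : Fin (d+2), i ≠ 0 → 0 < Real.Gamma (θ * P 0 i) := fun i hi =>
    Real.Gamma_pos_of_pos (mul_pos hθ (hP1pos i hi))
  have hFind : ∀ (m m' : Fin (d+2) → ℤ), (∀ i, i ≠ 0 → m i = m' i) → F m = F m' := by
    intro m m' h
    exact Finset.prod_congr rfl fun i hi => by
      rw [h i (Finset.mem_erase.mp hi).1]
  have hFrec : ∀ (m : Fin (d+2) → ℤ) (i : Fin (d+2)), i ≠ 0 → 1 ≤ m i →
      F m = (θ * P 0 i + (m i : ℝ) - 1) * F (m - stdE i) := by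
    intro m i hi hmi
    have hiE : i ∈ univ.erase 0 := Finset.mem_erase.mpr ⟨hi, mem_univ i⟩
    simp only [hF]
    rw [← Finset.mul_prod_erase _ _ hiE, ← Finset.mul_prod_erase _ _ hiE]
    have hrest : ∏ j ∈ ((univ.erase (0 : Fin (d+2)))).erase i,
          Real.Gamma (θ * P 0 j + ((m - stdE i) j : ℝ)) / Real.Gamma (θ * P 0 j)
        = ∏ j ∈ ((univ.erase (0 : Fin (d+2)))).erase i,
          Real.Gamma (θ * P 0 j + (m j : ℝ)) / Real.Gamma (θ * P 0 j) := by
      refine Finset.prod_congr rfl fun j hj => ?_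
      have hji : j ≠ i := (Finset.mem_erase.mp hj).1
      have : (m - stdE i) j = m j := by simp [Pi.sub_apply, hstdE, hji]
      rw [this]
    rw [hrest, ← mul_assoc]
    congr 1
    have hx : (0:ℝ) < θ * P 0 i + (m i : ℝ) - 1 := by
      have : (1:ℝ) ≤ (m i : ℝ) := by exact_mod_cast hmi
      nlinarith [mul_pos hθ (hP1pos i hi)]
    have hsub : ((m - stdE i) i : ℝ) = (m i : ℝ) - 1 := by
      simp [Pi.sub_apply, hstdE]
    rw [hsub]
    have hgamma : Real.Gamma (θ * P 0 i + (m i : ℝ))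
        = (θ * P 0 i + (m i : ℝ) - 1) * Real.Gamma (θ * P 0 i + (m i : ℝ) - 1) := by
      have := Real.Gamma_add_one (ne_of_gt hx)
      rw [show θ * P 0 i + (m i : ℝ) - 1 + 1 = θ * P 0 i + (m i : ℝ) by ring] at this
      exact this
    rw [hgamma, show θ * P 0 i + ((m i : ℝ) - 1) = θ * P 0 i + (m i : ℝ) - 1 by ring]
    field_simp
  -- base : vectors supported on coordinate 0
  have hbase : ∀ t : ℕ, ∀ m : Fin (d+2) → ℤ, IsNatVec m → (∀ i, i ≠ 0 → m i = 0) →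
      (m 0).toNat = t → qt 0 m = 1 := by
    intro t
    induction t with
    | zero =>
      intro m hm hz h0
      have : m = 0 := by
        funext i
        by_cases hi : i = 0
        · subst hi; have := hm 0; simp; omega
        · simpa using hz i hi
      rw [this]
      exact hqt1
    | succ t IH =>
      intro m hm hz h0
      have hm0 : 1 ≤ m 0 := by have := hm 0; omega
      have hm' : IsNatVec (m - stdE (0 : Fin (d+2))) := hNsub m hm 0 hm0
      have hmeq : m = (m - stdE (0 : Fin (d+2))) + stdE (0 : Fin (d+2)) := by funext j; simp
      rw [hmeq, hA _ hm']
      refine IH _ hm' (fun i hi => ?_) ?_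
      · rw [Pi.sub_apply, hstdE, if_neg hi, sub_zero]; exact hz i hi
      · have : (m - stdE (0 : Fin (d+2))) 0 = m 0 - 1 := by simp [Pi.sub_apply, hstdE]
        rw [this]; omega
  -- main induction
  have main : ∀ s : ℕ, ∀ m : Fin (d+2) → ℤ, IsNatVec m → (tot m - m 0).toNat = s →
      qt 0 m = F m := by
    intro s
    induction s using Nat.strong_induction_on with
    | _ s IH =>
      intro m hm hs
      have hnn := hexn m hm
      rcases Nat.eq_zero_or_pos s with h0 | hpos
      · -- base case
        subst h0
        have hsum0 : tot m - m 0 = 0 := by omega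
        have hz : ∀ i, i ≠ 0 → m i = 0 := by
          intro i hi
          have hsum : ∑ j ∈ (univ.erase (0 : Fin (d+2))), m j = 0 := by rw [← htote]; omega
          have := (Finset.sum_eq_zero_iff_of_nonneg fun j _ => hm j).mp hsum i
            (Finset.mem_erase.mpr ⟨hi, mem_univ i⟩)
          exact this
        have h1 : qt 0 m = 1 := hbase (m 0).toNat m hm hz rfl
        have h2 : F m = 1 := by
          rw [hF]
          refine Finset.prod_eq_one fun i hi => ?_
          have hi0 : i ≠ 0 := (Finset.mem_erase.mp hi).1
          rw [hz i hi0]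
          simp [div_self (ne_of_gt (hGpos i hi0))]
        rw [h1, h2]
      · -- inductive step
        have hne : m ≠ 0 := by
          intro hcontra
          rw [hcontra] at hs
          simp [tot] at hs
          omega
        have hkey := hB m hm hne
        have hstep : ∀ i : Fin (d+2), i ∈ univ.erase 0 →
            (m i : ℝ) * ((m i : ℝ) - 1) * qt 0 (m - stdE i)
              + (m i : ℝ) * θ * P 0 i * qt 0 (m - stdE i + stdE (0 : Fin (d+2)))
            = (m i : ℝ) * F m := by
          intro i hiE
          have hi0 : i ≠ 0 := (Finset.mem_erase.mp hiE).1
          by_cases hmi : m i = 0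
          · rw [hmi]; push_cast
            have : F m = (θ * P 0 i + (0:ℝ)) * 0 + F m := by ring
            ring
          · have hmi1 : 1 ≤ m i := by have := hm i; omega
            have hnv1 : IsNatVec (m - stdE i) := hNsub m hm i hmi1
            have hnv2 : IsNatVec (m - stdE i + stdE (0 : Fin (d+2))) := hNadd _ hnv1 0
            have hexp1 : tot (m - stdE i) - (m - stdE i) 0 = tot m - m 0 - 1 := by
              rw [hexp_sub, if_neg hi0]
            have hexp2 : tot (m - stdE i + stdE (0 : Fin (d+2))) - (m - stdE i + stdE (0 : Fin (d+2))) 0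
                = tot m - m 0 - 1 := by
              rw [hexp_add, if_pos rfl, hexp1, add_zero]
            have hlt : (tot (m - stdE i) - (m - stdE i) 0).toNat < s := by
              rw [hexp1]; omega
            have hlt2 : (tot (m - stdE i + stdE (0 : Fin (d+2))) - (m - stdE i + stdE (0 : Fin (d+2))) 0).toNat < s := by
              rw [hexp2]; omega
            have hIH1 : qt 0 (m - stdE i) = F (m - stdE i) := IH _ hlt (m - stdE i) hnv1 rfl
            have hIH2 : qt 0 (m - stdE i + stdE (0 : Fin (d+2))) = F (m - stdE i + stdE (0 : Fin (d+2))) :=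
              IH _ hlt2 (m - stdE i + stdE (0 : Fin (d+2))) hnv2 rfl
            have hFeq : F (m - stdE i + stdE (0 : Fin (d+2))) = F (m - stdE i) := by
              refine hFind _ _ fun j hj => ?_
              simp [Pi.add_apply, hstdE, hj]
            rw [hIH1, hIH2, hFeq]
            have hrec := hFrec m i hi0 hmi1
            rw [hrec]
            ring
        rw [Finset.sum_congr rfl hstep, ← Finset.sum_mul] at hkey
        have hceq : (∑ i ∈ (univ.erase (0 : Fin (d+2))), (m i : ℝ)) = (tot m : ℝ) - (m 0 : ℝ) := by
          rw [show (tot m : ℝ) - (m 0 : ℝ) = ((tot m - m 0 : ℤ) : ℝ) by push_cast; ring,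
            htote]
          push_cast
          rfl
        rw [hceq] at hkey
        have hcne : (tot m : ℝ) - (m 0 : ℝ) ≠ 0 := by
          have : 0 < tot m - m 0 := by omega
          have : (0:ℝ) < (tot m : ℝ) - (m 0 : ℝ) := by
            rw [show (tot m : ℝ) - (m 0 : ℝ) = ((tot m - m 0 : ℤ) : ℝ) by push_cast; ring]
            exact_mod_cast this
          linarith
        exact mul_left_cancel₀ hcne hkey
  exact main (tot n - n 0).toNat n hn rfl
end
end

section
/- Let q^{(σ)} be a family of sampling probabilities and let q̃_k (k ∈ ℕ) be a family of asymptotic-expansion coefficients for q^{(σ)}. Then the first-order coefficient satisfies the explicit formulas: (i) q̃_1(e_1) = −θ(1 − P_{11}); (ii) q̃_1(n_1 e_1) = −n_1 θ(1 − P_{11}) for every integer n_1 ≥ 1; and (iii) q̃_1(e_i) = θ P_{1i}(1 − θ) + θ² ∑_{j=2}^d P_{1j} P_{ji} for every i = 2,…,d. -/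
open Finset Filter Asymptotics

noncomputable section

set_option maxHeartbeats 1000000 in
/-- `f(σ) = a + b σ⁻¹ + O(σ⁻²)` as `σ → ∞`. -/
def T2 (f : ℝ → ℝ) (a b : ℝ) : Prop :=
  (fun σ => f σ - (a + b * σ⁻¹)) =O[atTop] fun σ : ℝ => σ ^ (-2 : ℤ)

lemma t2_congr {f g : ℝ → ℝ} {a b : ℝ} (h : T2 f a b)
    (hfg : ∀ᶠ σ in atTop, f σ = g σ) : T2 g a b := by
  refine h.congr' ?_ EventuallyEq.rfl
  filter_upwards [hfg] with σ hσ; rw [hσ]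

lemma t2_zero : T2 (fun _ => 0) 0 0 := by
  simpa [T2] using (isBigO_refl (fun σ : ℝ => σ ^ (-2 : ℤ)) atTop).const_mul_left 0 |>.congr_left
    (by intro x; ring)

lemma t2_add {f g : ℝ → ℝ} {a b a' b' : ℝ} (hf : T2 f a b) (hg : T2 g a' b') :
    T2 (fun σ => f σ + g σ) (a + a') (b + b') := by
  have := hf.add hg
  refine this.congr_left fun σ => by ring

lemma t2_const_mul {f : ℝ → ℝ} {a b : ℝ} (c : ℝ) (hf : T2 f a b) :
    T2 (fun σ => c * f σ) (c * a) (c * b) := by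
  have := hf.const_mul_left c
  refine this.congr_left fun σ => by ring

lemma t2_sum {ι : Type*} (s : Finset ι) (f : ι → ℝ → ℝ) (a b : ι → ℝ)
    (h : ∀ i ∈ s, T2 (f i) (a i) (b i)) :
    T2 (fun σ => ∑ i ∈ s, f i σ) (∑ i ∈ s, a i) (∑ i ∈ s, b i) := by
  classical
  induction s using Finset.induction_on with
  | empty => simpa using t2_zero
  | @insert x s hxs ih =>
    simp only [Finset.sum_insert hxs]
    exact t2_add (h x (Finset.mem_insert_self x s))
      (ih fun i hi => h i (Finset.mem_insert_of_mem hi))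

lemma zpow_bigO {m k : ℤ} (h : m ≤ k) :
    (fun σ : ℝ => σ ^ m) =O[atTop] fun σ : ℝ => σ ^ k := by
  refine IsBigO.of_bound 1 ?_
  filter_upwards [eventually_ge_atTop (1 : ℝ)] with σ hσ
  rw [one_mul, Real.norm_eq_abs, Real.norm_eq_abs,
    abs_of_nonneg (zpow_nonneg (by linarith : (0:ℝ) ≤ σ) _),
    abs_of_nonneg (zpow_nonneg (by linarith : (0:ℝ) ≤ σ) _)]
  exact zpow_le_zpow_right₀ hσ h

lemma t2_bounded {f : ℝ → ℝ} {a b : ℝ} (hf : T2 f a b) :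
    (fun σ => f σ) =O[atTop] (fun _ : ℝ => (1 : ℝ)) := by
  have h1 : (fun σ : ℝ => f σ - (a + b * σ⁻¹)) =O[atTop] (fun _ : ℝ => (1 : ℝ)) :=
    hf.trans (by simpa using zpow_bigO (by norm_num : (-2 : ℤ) ≤ 0))
  have h2 : (fun σ : ℝ => a + b * σ⁻¹) =O[atTop] (fun _ : ℝ => (1 : ℝ)) := by
    refine (isBigO_const_const a one_ne_zero atTop).add ?_
    have : (fun σ : ℝ => σ⁻¹) =O[atTop] (fun _ : ℝ => (1 : ℝ)) := by
      simpa using zpow_bigO (by norm_num : (-1 : ℤ) ≤ 0)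
    simpa using this.const_mul_left b
  simpa using (h1.add h2).congr_left fun σ => by ring

lemma t2_shift {f : ℝ → ℝ} {a b : ℝ} (hf : T2 f a b) :
    T2 (fun σ => σ⁻¹ * f σ) 0 a := by
  have h1 : (fun σ : ℝ => f σ - a) =O[atTop] fun σ : ℝ => σ ^ (-1 : ℤ) := by
    have hb : (fun σ : ℝ => b * σ⁻¹) =O[atTop] fun σ : ℝ => σ ^ (-1 : ℤ) := by
      simpa [zpow_neg_one] using
        (isBigO_refl (fun σ : ℝ => σ⁻¹) atTop).const_mul_left b
    have := (hf.trans (zpow_bigO (by norm_num : (-2:ℤ) ≤ -1))).add hb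
    exact this.congr_left fun σ => by ring
  have h2 : (fun σ : ℝ => σ⁻¹ * (f σ - a)) =O[atTop] fun σ : ℝ => σ ^ (-2 : ℤ) := by
    have := (isBigO_refl (fun σ : ℝ => σ⁻¹) atTop).mul h1
    refine this.trans (IsBigO.of_bound 1 ?_)
    filter_upwards [eventually_ge_atTop (1 : ℝ)] with σ hσ
    have hσ0 : σ ≠ 0 := by linarith
    have : σ⁻¹ * σ ^ (-1:ℤ) = σ ^ (-2:ℤ) := by
      rw [show (-2:ℤ) = -1 + -1 by norm_num, zpow_add₀ hσ0, zpow_neg_one]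
    rw [one_mul, this]
  refine h2.congr_left fun σ => by ring

lemma t2_shift2 {f : ℝ → ℝ} {a b : ℝ} (hf : T2 f a b) :
    T2 (fun σ => σ⁻¹ * (σ⁻¹ * f σ)) 0 0 := by
  have h := (t2_shift (t2_shift hf)) -- T2 (σ⁻¹ * (σ⁻¹ f)) 0 0
  exact h

lemma const_eq_zero_of_bigO_inv {c : ℝ}
    (h : (fun _ : ℝ => c) =O[atTop] fun σ : ℝ => σ⁻¹) : c = 0 := by
  have hlim : Tendsto (fun _ : ℝ => c) atTop (nhds 0) :=
    h.trans_tendsto tendsto_inv_atTop_zero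
  exact (tendsto_nhds_unique tendsto_const_nhds hlim)

lemma t2_unique {f : ℝ → ℝ} {a b a' b' : ℝ} (h1 : T2 f a b) (h2 : T2 f a' b') :
    a = a' ∧ b = b' := by
  have hd : (fun σ : ℝ => (a' - a) + (b' - b) * σ⁻¹) =O[atTop]
      fun σ : ℝ => σ ^ (-2 : ℤ) := by
    have := h1.sub h2
    exact this.congr_left fun σ => by ring
  have ha : a = a' := by
    have : (fun _ : ℝ => a' - a) =O[atTop] fun σ : ℝ => σ⁻¹ := by
      have h₁ : (fun σ : ℝ => (a'-a) + (b'-b) * σ⁻¹) =O[atTop] fun σ : ℝ => σ⁻¹ := by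
        simpa [zpow_neg_one] using hd.trans (zpow_bigO (by norm_num : (-2:ℤ) ≤ -1))
      have h₂ : (fun σ : ℝ => (b'-b) * σ⁻¹) =O[atTop] fun σ : ℝ => σ⁻¹ :=
        (isBigO_refl _ atTop).const_mul_left _
      exact (h₁.sub h₂).congr_left fun σ => by ring
    have := const_eq_zero_of_bigO_inv this
    linarith
  subst ha
  have hb : b = b' := by
    have hd' : (fun σ : ℝ => (b' - b) * σ⁻¹) =O[atTop] fun σ : ℝ => σ ^ (-2 : ℤ) := by
      exact hd.congr_left fun σ => by ring
    have hmul : (fun _ : ℝ => b' - b) =O[atTop] fun σ : ℝ => σ⁻¹ := by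
      have h3 := hd'.mul (isBigO_refl (fun σ : ℝ => σ) atTop)
      refine h3.congr' ?_ ?_
      · filter_upwards [eventually_ge_atTop (1 : ℝ)] with σ hσ
        have hσ0 : σ ≠ 0 := by linarith
        field_simp
      · filter_upwards [eventually_ge_atTop (1 : ℝ)] with σ hσ
        have hσ0 : σ ≠ 0 := by linarith
        rw [show (-2:ℤ) = -1 + -1 by norm_num, zpow_add₀ hσ0, zpow_neg_one]
        field_simp
    have := const_eq_zero_of_bigO_inv hmul
    linarith
  exact ⟨rfl, hb⟩

section Main
variable {d : ℕ}

lemma stdE_app (i j : Fin (d + 2)) : stdE i j = if j = i then 1 else 0 := rfl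

lemma tot_stdE (i : Fin (d + 2)) : tot (stdE i) = 1 := by
  simp [tot, stdE]

lemma tot_add (n m : Fin (d + 2) → ℤ) : tot (n + m) = tot n + tot m := by
  simp [tot, Finset.sum_add_distrib]

lemma tot_sub (n m : Fin (d + 2) → ℤ) : tot (n - m) = tot n - tot m := by
  simp [tot, Finset.sum_sub_distrib]

/-- the number of non-first-type individuals -/
def Mv (n : Fin (d + 2) → ℤ) : ℤ := tot n - n 0

lemma stdE_app0 (i : Fin (d + 2)) : stdE i 0 = if i = 0 then 1 else 0 := by
  rw [stdE_app]; by_cases h : i = 0 <;> simp [h, eq_comm]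

lemma Mv_add (n : Fin (d + 2) → ℤ) (i : Fin (d + 2)) :
    Mv (n + stdE i) = Mv n + (if i = 0 then 0 else 1) := by
  simp only [Mv, tot_add, tot_stdE, Pi.add_apply, stdE_app0]
  by_cases h : i = 0 <;> simp [h] <;> ring

lemma Mv_sub (n : Fin (d + 2) → ℤ) (i : Fin (d + 2)) :
    Mv (n - stdE i) = Mv n - (if i = 0 then 0 else 1) := by
  simp only [Mv, tot_sub, tot_stdE, Pi.sub_apply, stdE_app0]
  by_cases h : i = 0 <;> simp [h] <;> ring

variable {θ : ℝ} {P : Fin (d + 2) → Fin (d + 2) → ℝ}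
  {q : ℝ → (Fin (d + 2) → ℤ) → ℝ} {qt : ℕ → (Fin (d + 2) → ℤ) → ℝ}

/-- the rescaled sampling probability `σ^{‖n‖ - n₀} q^σ(n)` -/
def Gf (q : ℝ → (Fin (d + 2) → ℤ) → ℝ) (n : Fin (d + 2) → ℤ) : ℝ → ℝ :=
  fun σ => σ ^ (Mv n) * q σ n

/-- rewriting powers of `σ` times `q` in terms of `Gf` -/
lemma pow_mul_q {σ : ℝ} (hσ : σ ≠ 0) (m : ℤ) (n : Fin (d + 2) → ℤ) :
    σ ^ m * q σ n = σ ^ (m - Mv n) * Gf q n σ := by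
  rw [Gf, ← mul_assoc, ← zpow_add₀ hσ, sub_add_cancel]

lemma hT2 (hq : IsSamplingFamily θ P q) (hqt : IsExpansionCoeffs q qt)
    (n : Fin (d + 2) → ℤ) : T2 (Gf q n) (qt 0 n) (qt 1 n) := by
  by_cases h : ∃ i, n i < 0
  · have h0 : qt 0 n = 0 := hqt.2.2.1 0 n h
    have h1 : qt 1 n = 0 := hqt.2.2.1 1 n h
    rw [h0, h1]
    refine t2_congr t2_zero ?_
    filter_upwards [eventually_gt_atTop (0 : ℝ)] with σ hσ
    show (0:ℝ) = σ ^ (Mv n) * q σ n; rw [hq.2.1 σ hσ n h, mul_zero]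
  · push_neg at h
    have hn : IsNatVec n := fun i => h i
    have h1 := hqt.2.2.2 n hn 1
    unfold T2
    refine h1.congr ?_ ?_
    · intro σ
      simp [Finset.sum_range_succ, Gf, Mv, zpow_neg_one]
    · intro σ
      norm_num

/-- consistency master: coefficient equations from the consistency condition -/
lemma cons_master (hq : IsSamplingFamily θ P q) (hqt : IsExpansionCoeffs q qt)
    (n : Fin (d + 2) → ℤ) (hn : IsNatVec n) :
    qt 0 (n + stdE 0) = qt 0 n ∧
    qt 1 (n + stdE 0) + ∑ i ∈ (univ.erase (0 : Fin (d+2))), qt 0 (n + stdE i) = qt 1 n := by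
  have hL : T2 (Gf q n) (qt 0 n) (qt 1 n) := hT2 hq hqt n
  have hR : T2 (fun σ => Gf q (n + stdE 0) σ
        + ∑ i ∈ (univ.erase (0 : Fin (d+2))), σ⁻¹ * Gf q (n + stdE i) σ)
      (qt 0 (n + stdE 0) + ∑ i ∈ (univ.erase (0 : Fin (d+2))), (0:ℝ))
      (qt 1 (n + stdE 0) + ∑ i ∈ (univ.erase (0 : Fin (d+2))), qt 0 (n + stdE i)) := by
    exact t2_add (hT2 hq hqt _)
      (t2_sum (univ.erase (0 : Fin (d+2))) (fun i => fun σ => σ⁻¹ * Gf q (n + stdE i) σ)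
        (fun _ => 0) (fun i => qt 0 (n + stdE i))
        (fun i _ => t2_shift (hT2 hq hqt _)))
  have heq : ∀ᶠ σ in atTop, Gf q n σ = Gf q (n + stdE 0) σ
      + ∑ i ∈ (univ.erase (0 : Fin (d+2))), σ⁻¹ * Gf q (n + stdE i) σ := by
    filter_upwards [eventually_gt_atTop (0 : ℝ)] with σ hσ
    have hσ0 : σ ≠ 0 := ne_of_gt hσ
    have hc := hq.2.2.1 σ hσ n hn
    have : Gf q n σ = ∑ i, σ ^ (Mv n) * q σ (n + stdE i) := by
      rw [Gf, ← Finset.mul_sum, hc]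
    rw [this, ← Finset.add_sum_erase _ _ (Finset.mem_univ 0)]
    congr 1
    · rw [pow_mul_q hσ0, Mv_add]
      simp
    · refine Finset.sum_congr rfl fun i hi => ?_
      have hi0 : i ≠ 0 := Finset.ne_of_mem_erase hi
      rw [pow_mul_q hσ0, Mv_add, if_neg hi0,
        show Mv n - (Mv n + 1) = -1 by ring, zpow_neg_one]
  have := t2_unique (t2_congr hL heq) hR
  refine ⟨?_, this.2.symm⟩
  have := this.1
  simpa using this.symm

lemma rec_master (hq : IsSamplingFamily θ P q) (hqt : IsExpansionCoeffs q qt)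
    (n : Fin (d + 2) → ℤ) (hn : IsNatVec n) (hne : n ≠ 0) :
    (((tot n : ℝ) - (n 0 : ℝ)) * qt 0 n
      = (∑ i, (n i : ℝ) * ((n i : ℝ) - 1) * (if i = 0 then 0 else qt 0 (n - stdE i)))
        + ∑ i, ∑ j, (n i : ℝ) * θ * P j i *
            (if i = 0 then 0 else if j = 0 then qt 0 (n - stdE i + stdE j) else 0))
    ∧ ((tot n : ℝ) * ((tot n : ℝ) - 1 + θ) * qt 0 n + ((tot n : ℝ) - (n 0 : ℝ)) * qt 1 n
      = (∑ i, (n i : ℝ) * ((n i : ℝ) - 1) *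
            (if i = 0 then qt 0 (n - stdE i) else qt 1 (n - stdE i)))
        + (∑ i, ∑ j, (n i : ℝ) * θ * P j i *
            (if i = 0 then (if j = 0 then qt 0 (n - stdE i + stdE j) else 0)
             else (if j = 0 then qt 1 (n - stdE i + stdE j) else qt 0 (n - stdE i + stdE j))))
        + (tot n : ℝ) * ∑ l ∈ (univ.erase (0 : Fin (d+2))), qt 0 (n + stdE l)) := by
  classical
  -- the left-hand side function
  have hL : T2 (fun σ => ((tot n : ℝ) * ((tot n : ℝ) - 1 + θ)) * (σ⁻¹ * Gf q n σ)
        + ((tot n : ℝ) - (n 0 : ℝ)) * Gf q n σ)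
      (((tot n : ℝ) * ((tot n : ℝ) - 1 + θ)) * 0 + ((tot n : ℝ) - (n 0 : ℝ)) * qt 0 n)
      (((tot n : ℝ) * ((tot n : ℝ) - 1 + θ)) * qt 0 n
        + ((tot n : ℝ) - (n 0 : ℝ)) * qt 1 n) :=
    t2_add (t2_const_mul _ (t2_shift (hT2 hq hqt n))) (t2_const_mul _ (hT2 hq hqt n))
  -- the right-hand side function
  have hE1 : ∀ i : Fin (d + 2), T2
      (fun σ => if i = 0 then σ⁻¹ * Gf q (n - stdE i) σ else Gf q (n - stdE i) σ)
      (if i = 0 then 0 else qt 0 (n - stdE i))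
      (if i = 0 then qt 0 (n - stdE i) else qt 1 (n - stdE i)) := by
    intro i
    by_cases h : i = 0
    · simp only [if_pos h]; exact t2_shift (hT2 hq hqt _)
    · simp only [if_neg h]; exact hT2 hq hqt _
  have hE2 : ∀ i j : Fin (d + 2), T2
      (fun σ => if i = 0 then
          (if j = 0 then σ⁻¹ * Gf q (n - stdE i + stdE j) σ
           else σ⁻¹ * (σ⁻¹ * Gf q (n - stdE i + stdE j) σ))
        else (if j = 0 then Gf q (n - stdE i + stdE j) σ
           else σ⁻¹ * Gf q (n - stdE i + stdE j) σ))
      (if i = 0 then 0 else if j = 0 then qt 0 (n - stdE i + stdE j) else 0)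
      (if i = 0 then (if j = 0 then qt 0 (n - stdE i + stdE j) else 0)
       else (if j = 0 then qt 1 (n - stdE i + stdE j) else qt 0 (n - stdE i + stdE j))) := by
    intro i j
    by_cases hi : i = 0 <;> by_cases hj : j = 0
    · simp only [if_pos hi, if_pos hj]; exact t2_shift (hT2 hq hqt _)
    · simp only [if_pos hi, if_neg hj]; exact t2_shift2 (hT2 hq hqt _)
    · simp only [if_neg hi, if_pos hj]; exact hT2 hq hqt _
    · simp only [if_neg hi, if_neg hj]; exact t2_shift (hT2 hq hqt _)
  have hR : T2 (fun σ =>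
      (∑ i, (n i : ℝ) * ((n i : ℝ) - 1) *
        (if i = 0 then σ⁻¹ * Gf q (n - stdE i) σ else Gf q (n - stdE i) σ))
      + (∑ i, ∑ j, (n i : ℝ) * θ * P j i *
        (if i = 0 then
          (if j = 0 then σ⁻¹ * Gf q (n - stdE i + stdE j) σ
           else σ⁻¹ * (σ⁻¹ * Gf q (n - stdE i + stdE j) σ))
        else (if j = 0 then Gf q (n - stdE i + stdE j) σ
           else σ⁻¹ * Gf q (n - stdE i + stdE j) σ)))
      + (tot n : ℝ) * ∑ l ∈ (univ.erase (0 : Fin (d+2))), σ⁻¹ * Gf q (n + stdE l) σ)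
      ((∑ i, (n i : ℝ) * ((n i : ℝ) - 1) * (if i = 0 then 0 else qt 0 (n - stdE i)))
        + (∑ i, ∑ j, (n i : ℝ) * θ * P j i *
            (if i = 0 then 0 else if j = 0 then qt 0 (n - stdE i + stdE j) else 0))
        + (tot n : ℝ) * ∑ l ∈ (univ.erase (0 : Fin (d+2))), (0 : ℝ))
      ((∑ i, (n i : ℝ) * ((n i : ℝ) - 1) *
            (if i = 0 then qt 0 (n - stdE i) else qt 1 (n - stdE i)))
        + (∑ i, ∑ j, (n i : ℝ) * θ * P j i *
            (if i = 0 then (if j = 0 then qt 0 (n - stdE i + stdE j) else 0)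
             else (if j = 0 then qt 1 (n - stdE i + stdE j)
                   else qt 0 (n - stdE i + stdE j))))
        + (tot n : ℝ) * ∑ l ∈ (univ.erase (0 : Fin (d+2))), qt 0 (n + stdE l)) := by
    refine t2_add (t2_add ?_ ?_) (t2_const_mul _ ?_)
    · exact t2_sum _ _ _ _ (fun i _ => t2_const_mul _ (hE1 i))
    · refine t2_sum _ _ _ _ (fun i _ => ?_)
      exact t2_sum _ _ _ _ (fun j _ => t2_const_mul _ (hE2 i j))
    · exact t2_sum _ _ _ _ (fun l _ => t2_shift (hT2 hq hqt _))
  -- pointwise equality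
  have heq : ∀ᶠ σ in atTop,
      ((tot n : ℝ) * ((tot n : ℝ) - 1 + θ)) * (σ⁻¹ * Gf q n σ)
        + ((tot n : ℝ) - (n 0 : ℝ)) * Gf q n σ
      = (∑ i, (n i : ℝ) * ((n i : ℝ) - 1) *
          (if i = 0 then σ⁻¹ * Gf q (n - stdE i) σ else Gf q (n - stdE i) σ))
        + (∑ i, ∑ j, (n i : ℝ) * θ * P j i *
          (if i = 0 then
            (if j = 0 then σ⁻¹ * Gf q (n - stdE i + stdE j) σ
             else σ⁻¹ * (σ⁻¹ * Gf q (n - stdE i + stdE j) σ))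
          else (if j = 0 then Gf q (n - stdE i + stdE j) σ
             else σ⁻¹ * Gf q (n - stdE i + stdE j) σ)))
        + (tot n : ℝ) * ∑ l ∈ (univ.erase (0 : Fin (d+2))), σ⁻¹ * Gf q (n + stdE l) σ := by
    filter_upwards [eventually_gt_atTop (0 : ℝ)] with σ hσ
    have hσ0 : σ ≠ 0 := ne_of_gt hσ
    have hrec := hq.2.2.2 σ hσ n hn hne
    have epow : σ ^ (Mv n - 1) * σ = σ ^ (Mv n) := by
      rw [zpow_sub_one₀ hσ0, mul_assoc, inv_mul_cancel₀ hσ0, mul_one]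
    have hterm1 : ∀ i : Fin (d + 2), σ ^ (Mv n - 1) * q σ (n - stdE i)
        = (if i = 0 then σ⁻¹ * Gf q (n - stdE i) σ else Gf q (n - stdE i) σ) := by
      intro i
      rw [pow_mul_q hσ0, Mv_sub]
      by_cases h : i = 0
      · rw [if_pos h, if_pos h, show Mv n - 1 - (Mv n - 0) = -1 by ring, zpow_neg_one]
      · rw [if_neg h, if_neg h, show Mv n - 1 - (Mv n - 1) = 0 by ring, zpow_zero, one_mul]
    have hterm2 : ∀ i j : Fin (d + 2), σ ^ (Mv n - 1) * q σ (n - stdE i + stdE j)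
        = (if i = 0 then
            (if j = 0 then σ⁻¹ * Gf q (n - stdE i + stdE j) σ
             else σ⁻¹ * (σ⁻¹ * Gf q (n - stdE i + stdE j) σ))
          else (if j = 0 then Gf q (n - stdE i + stdE j) σ
             else σ⁻¹ * Gf q (n - stdE i + stdE j) σ)) := by
      intro i j
      rw [pow_mul_q hσ0, Mv_add, Mv_sub]
      by_cases hi : i = 0 <;> by_cases hj : j = 0 <;>
        simp only [hi, hj, if_true, if_false, ite_true, ite_false, if_pos, if_neg,
          not_false_iff]
      · rw [show Mv n - 1 - (Mv n - 0 + 0) = -1 by ring, zpow_neg_one]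
      · rw [show Mv n - 1 - (Mv n - 0 + 1) = -1 + -1 by ring, zpow_add₀ hσ0,
          zpow_neg_one, mul_assoc]
      · rw [show Mv n - 1 - (Mv n - 1 + 0) = 0 by ring, zpow_zero, one_mul]
      · rw [show Mv n - 1 - (Mv n - 1 + 1) = -1 by ring, zpow_neg_one]
    have hterm3 : ∀ l ∈ (univ.erase (0 : Fin (d+2))),
        σ ^ (Mv n) * q σ (n + stdE l) = σ⁻¹ * Gf q (n + stdE l) σ := by
      intro l hl
      rw [pow_mul_q hσ0, Mv_add, if_neg (Finset.ne_of_mem_erase hl),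
        show Mv n - (Mv n + 1) = -1 by ring, zpow_neg_one]
    have key := congrArg (fun x => σ ^ (Mv n - 1) * x) hrec
    -- LHS of key
    have hLHS : σ ^ (Mv n - 1) *
        (((tot n : ℝ) * ((tot n : ℝ) - 1 + θ) + ((tot n : ℝ) - (n 0 : ℝ)) * σ) * q σ n)
        = ((tot n : ℝ) * ((tot n : ℝ) - 1 + θ)) * (σ⁻¹ * Gf q n σ)
          + ((tot n : ℝ) - (n 0 : ℝ)) * Gf q n σ := by
      have e1 : σ ^ (Mv n - 1) * q σ n = σ⁻¹ * Gf q n σ := by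
        rw [pow_mul_q hσ0, show Mv n - 1 - Mv n = -1 by ring, zpow_neg_one]
      have e2 : σ ^ (Mv n - 1) * (σ * q σ n) = Gf q n σ := by
        rw [← mul_assoc, epow]; rfl
      calc σ ^ (Mv n - 1) *
          (((tot n : ℝ) * ((tot n : ℝ) - 1 + θ) + ((tot n : ℝ) - (n 0 : ℝ)) * σ) * q σ n)
          = ((tot n : ℝ) * ((tot n : ℝ) - 1 + θ)) * (σ ^ (Mv n - 1) * q σ n)
            + ((tot n : ℝ) - (n 0 : ℝ)) * (σ ^ (Mv n - 1) * (σ * q σ n)) := by ring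
        _ = _ := by rw [e1, e2]
    have hRHS : σ ^ (Mv n - 1) *
        ((∑ i, (n i : ℝ) * ((n i : ℝ) - 1) * q σ (n - stdE i))
          + (∑ i, ∑ j, (n i : ℝ) * θ * P j i * q σ (n - stdE i + stdE j))
          + σ * (tot n : ℝ) * ∑ l ∈ (univ.erase (0 : Fin (d+2))), q σ (n + stdE l))
        = (∑ i, (n i : ℝ) * ((n i : ℝ) - 1) *
            (if i = 0 then σ⁻¹ * Gf q (n - stdE i) σ else Gf q (n - stdE i) σ))
          + (∑ i, ∑ j, (n i : ℝ) * θ * P j i *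
            (if i = 0 then
              (if j = 0 then σ⁻¹ * Gf q (n - stdE i + stdE j) σ
               else σ⁻¹ * (σ⁻¹ * Gf q (n - stdE i + stdE j) σ))
            else (if j = 0 then Gf q (n - stdE i + stdE j) σ
               else σ⁻¹ * Gf q (n - stdE i + stdE j) σ)))
          + (tot n : ℝ) * ∑ l ∈ (univ.erase (0 : Fin (d+2))), σ⁻¹ * Gf q (n + stdE l) σ := by
      rw [mul_add, mul_add]
      congr 1
      · congr 1
        · rw [Finset.mul_sum]
          refine Finset.sum_congr rfl fun i _ => ?_
          rw [show σ ^ (Mv n - 1) * ((n i : ℝ) * ((n i : ℝ) - 1) * q σ (n - stdE i))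
              = (n i : ℝ) * ((n i : ℝ) - 1) * (σ ^ (Mv n - 1) * q σ (n - stdE i)) by ring,
            hterm1 i]
        · rw [Finset.mul_sum]
          refine Finset.sum_congr rfl fun i _ => ?_
          rw [Finset.mul_sum]
          refine Finset.sum_congr rfl fun j _ => ?_
          rw [show σ ^ (Mv n - 1) * ((n i : ℝ) * θ * P j i * q σ (n - stdE i + stdE j))
              = (n i : ℝ) * θ * P j i * (σ ^ (Mv n - 1) * q σ (n - stdE i + stdE j)) by ring,
            hterm2 i j]
      · rw [show σ ^ (Mv n - 1) * (σ * (tot n : ℝ) *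
            ∑ l ∈ (univ.erase (0 : Fin (d+2))), q σ (n + stdE l))
            = (tot n : ℝ) * ((σ ^ (Mv n - 1) * σ) *
              ∑ l ∈ (univ.erase (0 : Fin (d+2))), q σ (n + stdE l)) by ring,
          epow]
        congr 1
        rw [Finset.mul_sum]
        exact Finset.sum_congr rfl fun l hl => hterm3 l hl
    rw [hLHS, hRHS] at key
    exact key
  have := t2_unique (t2_congr hL heq) hR
  constructor
  · have h1 := this.1
    rw [mul_zero, zero_add] at h1
    rw [h1]
    simp
  · exact this.2

/-- the configuration `m · e₀` -/
def wv (d m : ℕ) : Fin (d + 2) → ℤ := fun j => if j = 0 then (m : ℤ) else 0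

lemma wv_zero : wv d 0 = 0 := by funext j; simp [wv]
lemma wv_natvec (m : ℕ) : IsNatVec (wv d m) := by
  intro j; unfold wv; split <;> simp
lemma wv_app0 (m : ℕ) : wv d m 0 = (m : ℤ) := by simp [wv]
lemma wv_tot (m : ℕ) : tot (wv d m) = (m : ℤ) := by simp [tot, wv]
lemma wv_add0 (m : ℕ) : wv d m + stdE 0 = wv d (m + 1) := by
  funext j; by_cases h : j = 0 <;> simp [wv, stdE, h] <;> push_cast <;> ring
lemma stdE0_eq_wv : (stdE 0 : Fin (d + 2) → ℤ) = wv d 1 := by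
  funext j; simp [wv, stdE]

lemma vm_natvec (m : ℕ) (i : Fin (d + 2)) : IsNatVec (wv d m + stdE i) := by
  intro j
  have h1 := wv_natvec (d := d) m j
  have h2 : (0 : ℤ) ≤ stdE i j := by unfold stdE; split <;> simp
  simpa [Pi.add_apply] using add_nonneg h1 h2

lemma vm_app0 (m : ℕ) (i : Fin (d + 2)) (hi : i ≠ 0) :
    (wv d m + stdE i) 0 = (m : ℤ) := by
  simp [wv, stdE, hi, (by simpa [eq_comm] using hi : ¬ (0 : Fin (d+2)) = i)]

lemma vm_tot (m : ℕ) (i : Fin (d + 2)) : tot (wv d m + stdE i) = (m : ℤ) + 1 := by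
  rw [tot_add, wv_tot, tot_stdE]

lemma vm_app (m : ℕ) (i i' : Fin (d + 2)) (hi' : i' ≠ 0) :
    (wv d m + stdE i) i' = if i' = i then 1 else 0 := by
  simp [wv, stdE, hi']

lemma vm_ne_zero (m : ℕ) (i : Fin (d + 2)) : wv d m + stdE i ≠ 0 := by
  intro h
  have h1 : (wv d m + stdE i) i = wv d m i + 1 := by simp [stdE]
  have h2 := wv_natvec (d := d) m i
  rw [h] at h1
  simp only [Pi.zero_apply] at h1
  omega

lemma vm_sub_self (m : ℕ) (i : Fin (d + 2)) :
    wv d m + stdE i - stdE i = wv d m := by ring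

lemma vm_sub_add (m : ℕ) (i j : Fin (d + 2)) :
    wv d m + stdE i - stdE i + stdE j = wv d m + stdE j := by ring

lemma isumAux (n : Fin (d + 2) → ℤ) (i' : Fin (d + 2)) :
    (∑ j, (n i' : ℝ) * θ * P j i' *
      (if i' = 0 then 0 else if j = 0 then qt 0 (n - stdE i' + stdE j) else 0))
    = if i' = 0 then 0 else (n i' : ℝ) * θ * P 0 i' * qt 0 (n - stdE i' + stdE 0) := by
  by_cases h : i' = 0
  · simp [h]
  · rw [if_neg h, Finset.sum_eq_single (0 : Fin (d + 2))]
    · rw [if_neg h, if_pos rfl]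
    · intro j _ hj
      rw [if_neg h, if_neg hj, mul_zero]
    · intro hh; exact absurd (Finset.mem_univ _) hh

lemma ee_natvec (i l : Fin (d + 2)) : IsNatVec (stdE i + stdE l) := by
  intro j
  have : ∀ a : Fin (d+2), (0:ℤ) ≤ stdE a j := by intro a; unfold stdE; split <;> simp
  simpa using add_nonneg (this i) (this l)

lemma ee_ne_zero (i l : Fin (d + 2)) : stdE i + stdE l ≠ 0 := by
  intro h
  have h1 := congrFun h i
  have h2 : ∀ a : Fin (d+2), (0:ℤ) ≤ stdE a i := by intro a; unfold stdE; split <;> simp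
  have h3 : stdE i i = 1 := by simp [stdE]
  simp only [Pi.add_apply, Pi.zero_apply, h3] at h1
  have := h2 l
  omega

lemma ee_tot (i l : Fin (d + 2)) : tot (stdE i + stdE l) = 2 := by
  rw [tot_add, tot_stdE, tot_stdE]; norm_num

lemma ee_app0 (i l : Fin (d + 2)) (hi : i ≠ 0) (hl : l ≠ 0) :
    (stdE i + stdE l) 0 = 0 := by
  simp [stdE, (by simpa [eq_comm] using hi : ¬ (0 : Fin (d+2)) = i),
    (by simpa [eq_comm] using hl : ¬ (0 : Fin (d+2)) = l)]

lemma ee_app (i l i' : Fin (d + 2)) :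
    (stdE i + stdE l) i' = (if i' = i then 1 else 0) + (if i' = l then 1 else 0) := by
  simp [stdE]


section Derivations
variable (hq : IsSamplingFamily θ P q) (hqt : IsExpansionCoeffs q qt)
include hq hqt

/-- L1 : `q̃₀(m e₀) = 1` -/
lemma L1 (m : ℕ) : qt 0 (wv d m) = 1 := by
  induction m with
  | zero => rw [wv_zero]; exact hqt.1
  | succ m ih =>
    have := (cons_master hq hqt (wv d m) (wv_natvec m)).1
    rw [wv_add0] at this
    rw [this, ih]

/-- L2 : `q̃₀(m e₀ + e_i) = θ P₀ᵢ` for `i ≠ 0` -/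
lemma L2 (m : ℕ) (i : Fin (d + 2)) (hi : i ≠ 0) :
    qt 0 (wv d m + stdE i) = θ * P 0 i := by
  set n : Fin (d + 2) → ℤ := wv d m + stdE i with hn
  have h1 := (rec_master hq hqt n (vm_natvec m i) (vm_ne_zero m i)).1
  -- left side
  have hL : ((tot n : ℝ) - (n 0 : ℝ)) * qt 0 n = qt 0 n := by
    rw [hn, vm_tot, vm_app0 m i hi]; push_cast; ring
  -- first sum vanishes
  have hS1 : (∑ i', (n i' : ℝ) * ((n i' : ℝ) - 1) *
      (if i' = 0 then 0 else qt 0 (n - stdE i'))) = 0 := by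
    refine Finset.sum_eq_zero fun i' _ => ?_
    by_cases h0 : i' = 0
    · rw [if_pos h0, mul_zero]
    · rw [hn, vm_app m i i' h0]
      by_cases h2 : i' = i <;> simp [h2]
  -- second sum
  have hS2 : (∑ i', ∑ j, (n i' : ℝ) * θ * P j i' *
      (if i' = 0 then 0 else if j = 0 then qt 0 (n - stdE i' + stdE j) else 0))
      = θ * P 0 i * qt 0 (wv d (m+1)) := by
    rw [Finset.sum_eq_single i]
    · rw [Finset.sum_eq_single (0 : Fin (d + 2))]
      · rw [if_neg hi, if_pos rfl, hn, vm_app m i i hi, if_pos rfl,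
          vm_sub_add, wv_add0]
        push_cast; ring
      · intro j _ hj
        rw [if_neg hi, if_neg hj, mul_zero]
      · intro h; exact absurd (Finset.mem_univ _) h
    · intro i' _ hi'
      refine Finset.sum_eq_zero fun j _ => ?_
      by_cases h0 : i' = 0
      · rw [if_pos h0, mul_zero]
      · rw [hn, vm_app m i i' h0, if_neg hi']
        push_cast; ring
    · intro h; exact absurd (Finset.mem_univ _) h
  rw [hL, hS1, hS2, L1 hq hqt (m+1), mul_one, zero_add] at h1
  exact h1

/-- L3 : `q̃₁(m e₀) = -m θ (1 - P₀₀)` -/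
lemma L3 (hProw : ∑ j, P 0 j = 1) (m : ℕ) :
    qt 1 (wv d m) = -(m : ℝ) * θ * (1 - P 0 0) := by
  have hsum : ∑ j ∈ (univ.erase (0 : Fin (d+2))), P 0 j = 1 - P 0 0 := by
    have := Finset.add_sum_erase univ (P 0) (Finset.mem_univ (0 : Fin (d+2)))
    rw [hProw] at this
    linarith
  induction m with
  | zero => rw [wv_zero]; simp [hqt.2.1 1 le_rfl]
  | succ m ih =>
    have hc := (cons_master hq hqt (wv d m) (wv_natvec m)).2
    rw [wv_add0] at hc
    have hsum2 : ∑ i ∈ (univ.erase (0 : Fin (d+2))), qt 0 (wv d m + stdE i)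
        = θ * (1 - P 0 0) := by
      rw [Finset.sum_congr rfl fun i hi => L2 hq hqt m i (Finset.ne_of_mem_erase hi),
        ← Finset.mul_sum, hsum]
    rw [hsum2, ih] at hc
    push_cast
    push_cast at hc
    linarith

/-- L4 : `q̃₀(e_i + e_l) = θ² P₀ᵢ P₀ₗ + δᵢₗ θ P₀ᵢ` for `i, l ≠ 0` -/
lemma L4 (i l : Fin (d + 2)) (hi : i ≠ 0) (hl : l ≠ 0) :
    qt 0 (stdE i + stdE l)
      = θ ^ 2 * P 0 i * P 0 l + (if i = l then θ * P 0 i else 0) := by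
  set n : Fin (d + 2) → ℤ := stdE i + stdE l with hn
  have h1 := (rec_master hq hqt n (ee_natvec i l) (ee_ne_zero i l)).1
  have hL : ((tot n : ℝ) - (n 0 : ℝ)) * qt 0 n = 2 * qt 0 n := by
    rw [hn, ee_tot, ee_app0 i l hi hl]; norm_num
  rw [hL] at h1
  have hS2 : (∑ i', ∑ j, (n i' : ℝ) * θ * P j i' *
      (if i' = 0 then 0 else if j = 0 then qt 0 (n - stdE i' + stdE j) else 0))
      = ∑ i', (if i' = 0 then 0
          else (n i' : ℝ) * θ * P 0 i' * qt 0 (n - stdE i' + stdE 0)) :=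
    Finset.sum_congr rfl fun i' _ => isumAux n i'
  rw [hS2] at h1
  by_cases hil : i = l
  · -- n = 2 e_i
    subst hil
    have hS1 : (∑ i', (n i' : ℝ) * ((n i' : ℝ) - 1) *
        (if i' = 0 then 0 else qt 0 (n - stdE i'))) = 2 * qt 0 (stdE i) := by
      rw [Finset.sum_eq_single i]
      · have hni : n i = 2 := by rw [hn, ee_app]; simp
        have hsub : n - stdE i = stdE i := by rw [hn]; ring
        rw [if_neg hi, hni, hsub]; norm_num
      · intro i' _ hi'
        have hni' : n i' = 0 := by rw [hn, ee_app, if_neg hi']; norm_num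
        rw [hni']; simp
      · intro hh; exact absurd (Finset.mem_univ _) hh
    have hS2' : (∑ i', (if i' = 0 then 0
        else (n i' : ℝ) * θ * P 0 i' * qt 0 (n - stdE i' + stdE 0)))
        = 2 * θ * P 0 i * (θ * P 0 i) := by
      rw [Finset.sum_eq_single i]
      · have hni : n i = 2 := by rw [hn, ee_app]; simp
        have hvec : n - stdE i + stdE 0 = wv d 1 + stdE i := by
          rw [hn, ← stdE0_eq_wv]; ring
        rw [if_neg hi, hni, hvec, L2 hq hqt 1 i hi]
        push_cast; ring
      · intro i' _ hi'
        by_cases h0 : i' = 0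
        · rw [if_pos h0]
        · have hni' : n i' = 0 := by rw [hn, ee_app, if_neg hi']; norm_num
          rw [if_neg h0, hni']; simp
      · intro hh; exact absurd (Finset.mem_univ _) hh
    have hq0 : qt 0 (stdE i) = θ * P 0 i := by
      have := L2 hq hqt 0 i hi
      rwa [wv_zero, zero_add] at this
    rw [hS1, hS2', hq0] at h1
    rw [if_pos rfl]
    linarith
  · -- i ≠ l
    have hS1 : (∑ i', (n i' : ℝ) * ((n i' : ℝ) - 1) *
        (if i' = 0 then 0 else qt 0 (n - stdE i'))) = 0 := by
      refine Finset.sum_eq_zero fun i' _ => ?_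
      by_cases h2 : i' = i
      · have hni' : n i' = 1 := by
          rw [hn, ee_app, if_pos h2, if_neg (h2 ▸ hil : ¬ i' = l)]; norm_num
        rw [hni']; simp
      · by_cases h3 : i' = l
        · have hni' : n i' = 1 := by rw [hn, ee_app, if_neg h2, if_pos h3]; norm_num
          rw [hni']; simp
        · have hni' : n i' = 0 := by rw [hn, ee_app, if_neg h2, if_neg h3]; norm_num
          rw [hni']; simp
    have hS2' : (∑ i', (if i' = 0 then 0
        else (n i' : ℝ) * θ * P 0 i' * qt 0 (n - stdE i' + stdE 0)))
        = θ * P 0 i * (θ * P 0 l) + θ * P 0 l * (θ * P 0 i) := by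
      have hpt : ∀ i' ∈ (univ : Finset (Fin (d+2))),
          (if i' = 0 then 0
            else (n i' : ℝ) * θ * P 0 i' * qt 0 (n - stdE i' + stdE 0))
          = (if i' = i then θ * P 0 i * (θ * P 0 l) else 0)
            + (if i' = l then θ * P 0 l * (θ * P 0 i) else 0) := by
        intro i' _
        by_cases h2 : i' = i
        · subst h2
          have hni : n i' = 1 := by
            rw [hn, ee_app, if_pos rfl, if_neg hil]; norm_num
          have hvec : n - stdE i' + stdE 0 = wv d 1 + stdE l := by
            rw [hn, ← stdE0_eq_wv]; ring
          rw [if_neg hi, if_pos rfl, if_neg hil, hni, hvec, L2 hq hqt 1 l hl]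
          push_cast; ring
        · by_cases h3 : i' = l
          · subst h3
            have hni : n i' = 1 := by rw [hn, ee_app, if_neg h2, if_pos rfl]; norm_num
            have hvec : n - stdE i' + stdE 0 = wv d 1 + stdE i := by
              rw [hn, ← stdE0_eq_wv]; ring
            rw [if_neg hl, if_neg h2, if_pos rfl, hni, hvec, L2 hq hqt 1 i hi]
            push_cast; ring
          · rw [if_neg h2, if_neg h3]
            by_cases h0 : i' = 0
            · rw [if_pos h0]; norm_num
            · have hni' : n i' = 0 := by
                rw [hn, ee_app, if_neg h2, if_neg h3]; norm_num
              rw [if_neg h0, hni']; simp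
      rw [Finset.sum_congr rfl hpt, Finset.sum_add_distrib,
        Finset.sum_ite_eq' univ i, Finset.sum_ite_eq' univ l]
      simp
    rw [hS1, hS2'] at h1
    rw [if_neg hil]
    linarith

/-- L5 : `q̃₁(e_i) = θ P₀ᵢ (1-θ) + θ² ∑_{j≠0} P₀ⱼ Pⱼᵢ` for `i ≠ 0` -/
lemma L5 (hProw : ∑ j, P 0 j = 1) (i : Fin (d + 2)) (hi : i ≠ 0) :
    qt 1 (stdE i)
      = θ * P 0 i * (1 - θ) + θ ^ 2 * ∑ j ∈ univ.erase 0, P 0 j * P j i := by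
  have hsum : ∑ j ∈ (univ.erase (0 : Fin (d+2))), P 0 j = 1 - P 0 0 := by
    have := Finset.add_sum_erase univ (P 0) (Finset.mem_univ (0 : Fin (d+2)))
    rw [hProw] at this
    linarith
  set n : Fin (d + 2) → ℤ := stdE i with hn
  have hnat : IsNatVec n := by
    rw [hn]; intro j; unfold stdE; split <;> simp
  have hne : n ≠ 0 := by
    rw [hn]
    intro h
    have := congrFun h i
    simp [stdE] at this
  have h2 := (rec_master hq hqt n hnat hne).2
  have hSb1 : (∑ i', (n i' : ℝ) * ((n i' : ℝ) - 1) *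
      (if i' = 0 then qt 0 (n - stdE i') else qt 1 (n - stdE i'))) = 0 := by
    refine Finset.sum_eq_zero fun i' _ => ?_
    by_cases h3 : i' = i
    · have hni' : n i' = 1 := by rw [hn, stdE_app, if_pos h3]
      rw [hni']; simp
    · have hni' : n i' = 0 := by rw [hn, stdE_app, if_neg h3]
      rw [hni']; simp
  have hSb2 : (∑ i', ∑ j, (n i' : ℝ) * θ * P j i' *
      (if i' = 0 then (if j = 0 then qt 0 (n - stdE i' + stdE j) else 0)
       else (if j = 0 then qt 1 (n - stdE i' + stdE j)
             else qt 0 (n - stdE i' + stdE j))))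
      = θ * P 0 i * (-(1:ℝ) * θ * (1 - P 0 0))
        + θ ^ 2 * ∑ j ∈ (univ.erase (0 : Fin (d+2))), P 0 j * P j i := by
    rw [Finset.sum_eq_single i]
    · have hni : n i = 1 := by rw [hn, stdE_app, if_pos rfl]
      have hterm : ∀ j : Fin (d+2), (n i : ℝ) * θ * P j i *
          (if i = 0 then (if j = 0 then qt 0 (n - stdE i + stdE j) else 0)
           else (if j = 0 then qt 1 (n - stdE i + stdE j)
                 else qt 0 (n - stdE i + stdE j)))
          = θ * P j i * (if j = 0 then qt 1 (stdE j) else qt 0 (stdE j)) := by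
        intro j
        rw [if_neg hi, hni, show n - stdE i + stdE j = stdE j by rw [hn]; ring]
        push_cast
        by_cases hj : j = 0
        · rw [if_pos hj]; ring
        · rw [if_neg hj]; ring
      rw [Finset.sum_congr rfl fun j _ => hterm j,
        ← Finset.add_sum_erase _ _ (Finset.mem_univ (0 : Fin (d+2)))]
      rw [if_pos rfl, stdE0_eq_wv, L3 hq hqt hProw 1]
      congr 1
      · push_cast; ring
      · rw [Finset.mul_sum]
        refine Finset.sum_congr rfl fun j hj => ?_
        rw [if_neg (Finset.ne_of_mem_erase hj)]
        have hL2 := L2 hq hqt 0 j (Finset.ne_of_mem_erase hj)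
        rw [wv_zero, zero_add] at hL2
        rw [hL2]; ring
    · intro i' _ hi'
      refine Finset.sum_eq_zero fun j _ => ?_
      have hni' : n i' = 0 := by rw [hn, stdE_app, if_neg hi']
      rw [hni']; simp
    · intro hh; exact absurd (Finset.mem_univ _) hh
  have hS3 : (∑ l ∈ (univ.erase (0 : Fin (d+2))), qt 0 (n + stdE l))
      = θ ^ 2 * P 0 i * (1 - P 0 0) + θ * P 0 i := by
    have hc : ∀ l ∈ (univ.erase (0 : Fin (d+2))), qt 0 (n + stdE l)
        = θ ^ 2 * P 0 i * P 0 l + (if i = l then θ * P 0 i else 0) := by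
      intro l hl
      rw [hn]; exact L4 hq hqt i l hi (Finset.ne_of_mem_erase hl)
    rw [Finset.sum_congr rfl hc, Finset.sum_add_distrib, Finset.sum_ite_eq,
      if_pos (Finset.mem_erase.mpr ⟨hi, Finset.mem_univ i⟩),
      show (∑ l ∈ (univ.erase (0 : Fin (d+2))), θ ^ 2 * P 0 i * P 0 l)
        = θ ^ 2 * P 0 i * (1 - P 0 0) by rw [← Finset.mul_sum, hsum]]
  have htot : tot n = 1 := by rw [hn]; exact tot_stdE i
  have hn0 : n 0 = 0 := by rw [hn, stdE_app0, if_neg hi]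
  have hq0 : qt 0 n = θ * P 0 i := by
    have := L2 hq hqt 0 i hi
    rwa [wv_zero, zero_add, ← hn] at this
  rw [hSb1, hSb2, hS3, hq0, htot, hn0] at h2
  push_cast at h2
  rw [hn] at h2 ⊢
  linear_combination h2

end Derivations


end Main

/-- **First-order coefficient**: explicit formulas for `q̃_1` at the boundary:
(i) `q̃_1(e_1) = -θ(1-P_{11})`; (ii) `q̃_1(n_1 e_1) = -n_1 θ(1-P_{11})` for `n_1 ≥ 1`;
(iii) `q̃_1(e_i) = θP_{1i}(1-θ) + θ² ∑_{j=2}^d P_{1j}P_{ji}` for `i = 2,…,d`. -/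
theorem first_order_coefficient {d : ℕ} (θ : ℝ) (hθ : 0 < θ)
    (P : Fin (d + 2) → Fin (d + 2) → ℝ)
    (hPnonneg : ∀ i j, 0 ≤ P i j) (hProw : ∀ i, ∑ j, P i j = 1)
    (q : ℝ → (Fin (d + 2) → ℤ) → ℝ) (qt : ℕ → (Fin (d + 2) → ℤ) → ℝ)
    (hq : IsSamplingFamily θ P q) (hqt : IsExpansionCoeffs q qt) :
    qt 1 (stdE 0) = - θ * (1 - P 0 0) ∧
    (∀ n₁ : ℤ, 1 ≤ n₁ → qt 1 (n₁ • stdE 0) = - (n₁ : ℝ) * θ * (1 - P 0 0)) ∧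
    (∀ i : Fin (d + 2), i ≠ 0 →
      qt 1 (stdE i)
        = θ * P 0 i * (1 - θ) + θ ^ 2 * ∑ j ∈ univ.erase 0, P 0 j * P j i) := by

  refine ⟨?_, ?_, fun i hi => L5 hq hqt (hProw 0) i hi⟩
  · rw [stdE0_eq_wv, L3 hq hqt (hProw 0) 1]
    push_cast; ring
  · intro n₁ hn₁
    have hv : (n₁ • stdE 0 : Fin (d + 2) → ℤ) = wv d n₁.toNat := by
      funext j
      simp only [Pi.smul_apply, smul_eq_mul, stdE, wv]
      by_cases h : j = 0
      · simp only [if_pos h, mul_one]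
        omega
      · simp [h]
    have hc : ((n₁.toNat : ℕ) : ℝ) = (n₁ : ℝ) := by
      rw [← Int.cast_natCast, Int.toNat_of_nonneg (by linarith)]
    rw [hv, L3 hq hqt (hProw 0) n₁.toNat, hc]
end
end

section
/- Assume parent-independent mutation: P_{ij} = Q_j for all i, j, where Q_1,…,Q_d > 0 and ∑_{j=1}^d Q_j = 1. Define q̃_k : ℤ^d → ℝ (k ∈ ℕ) by: q̃_k(n) = 0 whenever n has a negative component; for n ∈ ℕ^d, q̃_0(n) = ∏_{i=2}^d Γ(θQ_i + n_i)/Γ(θQ_i), and for k ≥ 1, q̃_k(n) = q̃_0(n) r_k(n) − ∑_{m=0}^{k−1} s_{k−m} q̃_m(n), where r_k(n) = (1/k!)(‖n‖ − n_1 + θ(1−Q_1))_k (1 − θQ_1 − n_1)_k and s_k = (1/k!)(θ(1−Q_1))_k (1 − θQ_1)_k. Then for every k ∈ ℕ this family satisfies: (I) q̃_k(e_1) = 1_{k=0} − 1_{k≥1} ∑_{i=2}^d q̃_{k−1}(e_i); (II) for i = 2,…,d, q̃_k(e_i) = 1_{k=0} θQ_i + 1_{k≥1} [ −θ q̃_{k−1}(e_i)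 + ∑_{j=2}^d q̃_{k−1}(e_i + e_j) ]; (III) for every integer n_1 > 1, q̃_k(n_1 e_1) = q̃_k((n_1−1)e_1) − 1_{k≥1}(n_1 − 2 + θ) q̃_{k−1}((n_1−1)e_1) + 1_{k≥1}(n_1 − 2 + θQ_1) q̃_{k−1}((n_1−2)e_1); (IV) for every n ∈ ℕ^d with ‖n‖ > 1, (‖n‖ − n_1) q̃_k(n) = ∑_{i=2}^d n_i(n_i − 1 + θQ_i) q̃_k(n − e_i) + 1_{k≥1} [ −‖n‖(‖n‖ − 1 + θ) q̃_{k−1}(n) + n_1(n_1 − 1 + θQ_1) q̃_{k−1}(n − e_1) + ‖n‖ ∑_{i=2}^d q̃_{k−1}(n + e_i) ]. -/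
open Finset

noncomputable section

lemma seq_cancel (s : ℕ → ℝ) (hs0 : s 0 = 1) (A : ℕ → ℝ)
    (h : ∀ k, ∑ m ∈ range (k+1), s (k-m) * A m = 0) : ∀ k, A k = 0 := by
  intro k
  induction k using Nat.strong_induction_on with
  | _ k ih =>
    have hk := h k
    rw [Finset.sum_range_succ] at hk
    have hz : ∑ m ∈ range k, s (k-m) * A m = 0 := by
      apply Finset.sum_eq_zero; intro m hm
      rw [ih m (Finset.mem_range.mp hm)]; ring
    rw [hz, Nat.sub_self, hs0, zero_add, one_mul] at hk
    exact hk

/-- evaluation of the rising factorial -/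
def ascE (k : ℕ) (x : ℝ) : ℝ := (ascPochhammer ℝ k).eval x

lemma ascE_def (k : ℕ) (x : ℝ) : Polynomial.eval x (ascPochhammer ℝ k) = ascE k x := rfl

lemma ascE_zero (x : ℝ) : ascE 0 x = 1 := by simp [ascE]

lemma ascE_succ (k : ℕ) (x : ℝ) : ascE (k+1) x = ascE k x * (x + k) := by
  rw [ascE, ascE, ascPochhammer_succ_right]; simp

lemma ascE_succ' (k : ℕ) (x : ℝ) : ascE (k+1) x = x * ascE k (x+1) := by
  rw [ascE, ascE, ascPochhammer_succ_left]; simp [Polynomial.eval_comp]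

lemma ascE_shift (k : ℕ) (x : ℝ) : x * ascE k (x+1) = ascE k x * (x + k) := by
  rw [← ascE_succ', ascE_succ]


set_option maxHeartbeats 1600000 in
/-- **Proposition 4.5** (PIM; explicit coefficients satisfy the characterising
relations): under parent-independent mutation with probabilities `Q_1,…,Q_d > 0`
summing to one, the family `q̃_k` defined by `q̃_0(n) = ∏_{i=2}^d Γ(θQ_i+n_i)/Γ(θQ_i)`
and, for `k ≥ 1`, `q̃_k(n) = q̃_0(n) r_k(n) - ∑_{m=0}^{k-1} s_{k-m} q̃_m(n)`, where
`r_k(n) = (1/k!)(‖n‖-n_1+θ(1-Q_1))_k (1-θQ_1-n_1)_k` and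
`s_k = (1/k!)(θ(1-Q_1))_k (1-θQ_1)_k` (rising factorials), satisfies the boundary
conditions (I), (II) and the recursions (III), (IV) of the PIM characterisation of the
asymptotic-expansion coefficients of the sampling probability.
(Allele `1` is represented by the index `0 : Fin (d+2)`.) -/
theorem PIM_explicit_coefficients_satisfy_characterisation {d : ℕ} (θ : ℝ) (hθ : 0 < θ)
    (Q : Fin (d + 2) → ℝ) (hQpos : ∀ j, 0 < Q j) (hQsum : ∑ j, Q j = 1)
    (r : ℕ → (Fin (d + 2) → ℤ) → ℝ)
    (hr : ∀ k n, r k n =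
      (1 / (Nat.factorial k : ℝ))
        * (ascPochhammer ℝ k).eval (((tot n : ℝ) - (n 0 : ℝ)) + θ * (1 - Q 0))
        * (ascPochhammer ℝ k).eval (1 - θ * Q 0 - (n 0 : ℝ)))
    (s : ℕ → ℝ)
    (hs : ∀ k, s k =
      (1 / (Nat.factorial k : ℝ))
        * (ascPochhammer ℝ k).eval (θ * (1 - Q 0))
        * (ascPochhammer ℝ k).eval (1 - θ * Q 0))
    (qt : ℕ → (Fin (d + 2) → ℤ) → ℝ)
    (hqtneg : ∀ k : ℕ, ∀ n : Fin (d + 2) → ℤ, (∃ i, n i < 0) → qt k n = 0)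
    (hqt0 : ∀ n : Fin (d + 2) → ℤ, IsNatVec n →
      qt 0 n = ∏ i ∈ univ.erase 0,
        Real.Gamma (θ * Q i + (n i : ℝ)) / Real.Gamma (θ * Q i))
    (hqtk : ∀ k : ℕ, 1 ≤ k → ∀ n : Fin (d + 2) → ℤ, IsNatVec n →
      qt k n = qt 0 n * r k n - ∑ m ∈ range k, s (k - m) * qt m n)
    (k : ℕ) :
    -- (I) boundary, fit allele
    (qt k (stdE 0)
      = (if k = 0 then 1 else 0)
        - (if 1 ≤ k then ∑ i ∈ univ.erase 0, qt (k - 1) (stdE i) else 0)) ∧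
    -- (II) boundary, unfit alleles
    (∀ i : Fin (d + 2), i ≠ 0 →
      qt k (stdE i)
        = (if k = 0 then θ * Q i else 0)
          + (if 1 ≤ k then
              - θ * qt (k - 1) (stdE i)
              + ∑ j ∈ univ.erase 0, qt (k - 1) (stdE i + stdE j)
            else 0)) ∧
    -- (III) recursion, fit allele only
    (∀ n₁ : ℤ, 1 < n₁ →
      qt k (n₁ • stdE 0)
        = qt k ((n₁ - 1) • stdE 0)
          - (if 1 ≤ k then ((n₁ : ℝ) - 2 + θ) * qt (k - 1) ((n₁ - 1) • stdE 0) else 0)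
          + (if 1 ≤ k then ((n₁ : ℝ) - 2 + θ * Q 0) * qt (k - 1) ((n₁ - 2) • stdE 0)
             else 0)) ∧
    -- (IV) recursion, general
    (∀ n : Fin (d + 2) → ℤ, IsNatVec n → 1 < tot n →
      ((tot n : ℝ) - (n 0 : ℝ)) * qt k n
        = (∑ i ∈ univ.erase 0,
            (n i : ℝ) * ((n i : ℝ) - 1 + θ * Q i) * qt k (n - stdE i))
          + (if 1 ≤ k then
              - (tot n : ℝ) * ((tot n : ℝ) - 1 + θ) * qt (k - 1) n
              + (n 0 : ℝ) * ((n 0 : ℝ) - 1 + θ * Q 0) * qt (k - 1) (n - stdE 0)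
              + (tot n : ℝ) * ∑ i ∈ univ.erase 0, qt (k - 1) (n + stdE i)
            else 0)) := by
  have hs0 : s 0 = 1 := by simp [hs]
  have hr0 : ∀ n, r 0 n = 1 := by intro n; simp [hr]
  have conv : ∀ (n : Fin (d+2) → ℤ) (k : ℕ),
      ∑ m ∈ range (k+1), s (k-m) * qt m n = qt 0 n * r k n := by
    intro n k
    by_cases hn : IsNatVec n
    · rcases Nat.eq_zero_or_pos k with rfl | hk
      · simp [hs0, hr0]
      · have h1 := hqtk k hk n hn
        rw [Finset.sum_range_succ, Nat.sub_self, hs0, one_mul]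
        linarith
    · unfold IsNatVec at hn; push_neg at hn
      obtain ⟨i, hi⟩ := hn
      have h0 : ∀ m, qt m n = 0 := fun m => hqtneg m n ⟨i, hi⟩
      simp [h0]
  have convS : ∀ (n : Fin (d+2) → ℤ) (k : ℕ),
      ∑ m ∈ range (k+1), s (k-m) * (if 1 ≤ m then qt (m-1) n else 0)
        = if 1 ≤ k then qt 0 n * r (k-1) n else 0 := by
    intro n k
    cases k with
    | zero => simp
    | succ K =>
      rw [Finset.sum_range_succ']
      have h1 : ∀ i, s (K + 1 - (i+1)) * (if 1 ≤ i + 1 then qt (i + 1 - 1) n else 0)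
          = s (K - i) * qt i n := by
        intro i; simp [Nat.succ_sub_succ]
      simp only [h1]
      rw [conv n K]
      simp
  have convC : ∀ (c : ℝ) (k : ℕ),
      ∑ m ∈ range (k+1), s (k-m) * (if m = 0 then c else 0) = s k * c := by
    intro c k
    rw [Finset.sum_eq_single 0]
    · simp
    · intro b _ hb; simp [hb]
    · intro h; exact absurd (Finset.mem_range.mpr (Nat.succ_pos k)) h
  -- Gamma positivity
  have hGpos : ∀ i, (0:ℝ) < Real.Gamma (θ * Q i) :=
    fun i => Real.Gamma_pos_of_pos (mul_pos hθ (hQpos i))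
  -- tot is additive
  have tot_add : ∀ x y : Fin (d+2) → ℤ, tot (x + y) = tot x + tot y := by
    intro x y; simp [tot, Finset.sum_add_distrib]
  have tot_sub : ∀ x y : Fin (d+2) → ℤ, tot (x - y) = tot x - tot y := by
    intro x y; simp [tot, Finset.sum_sub_distrib]
  have tot_stdE : ∀ i : Fin (d+2), tot (stdE i) = 1 := by
    intro i; simp [tot, stdE]
  have tot_smul : ∀ m : ℤ, tot ((m • stdE 0 : Fin (d+2) → ℤ)) = m := by
    intro m
    simp only [tot, Pi.smul_apply, stdE, smul_eq_mul, mul_ite, mul_one, mul_zero]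
    simp
  -- qt 0 shift
  have qt0_succ : ∀ (n : Fin (d+2) → ℤ), IsNatVec n → ∀ i : Fin (d+2), i ≠ 0 →
      qt 0 (n + stdE i) = (θ * Q i + (n i : ℝ)) * qt 0 n := by
    intro n hn i hi
    have hn' : IsNatVec (n + stdE i) := by
      intro j; by_cases hj : j = i <;> simp [stdE, hj] <;> [linarith [hn i]; exact hn j]
    rw [hqt0 _ hn', hqt0 _ hn]
    have hmem : i ∈ univ.erase (0 : Fin (d+2)) := Finset.mem_erase.mpr ⟨hi, Finset.mem_univ i⟩
    rw [← Finset.mul_prod_erase _ _ hmem, ← Finset.mul_prod_erase _ _ hmem]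
    have hrest : ∏ j ∈ (univ.erase (0 : Fin (d+2))).erase i,
        Real.Gamma (θ * Q j + ((n + stdE i) j : ℝ)) / Real.Gamma (θ * Q j)
        = ∏ j ∈ (univ.erase (0 : Fin (d+2))).erase i,
        Real.Gamma (θ * Q j + ((n) j : ℝ)) / Real.Gamma (θ * Q j) := by
      apply Finset.prod_congr rfl
      intro j hj
      have : j ≠ i := (Finset.mem_erase.mp hj).1
      simp [stdE, this]
    rw [hrest]
    have hcomp : ((n + stdE i) i : ℝ) = (n i : ℝ) + 1 := by simp [stdE]
    have hpos : (0:ℝ) < θ * Q i + (n i : ℝ) := by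
      have := hn i
      have : (0:ℝ) ≤ (n i : ℝ) := by exact_mod_cast this
      nlinarith [mul_pos hθ (hQpos i)]
    have hG : Real.Gamma (θ * Q i + (n i : ℝ) + 1)
        = (θ * Q i + (n i : ℝ)) * Real.Gamma (θ * Q i + (n i : ℝ)) :=
      Real.Gamma_add_one hpos.ne'
    rw [hcomp, ← add_assoc, hG]
    ring
  have qt0_zero : qt 0 (0 : Fin (d+2) → ℤ) = 1 := by
    rw [hqt0 0 (by intro i; simp)]
    apply Finset.prod_eq_one
    intro j _
    simp [div_self (hGpos j).ne']
  have qt0_e : ∀ i : Fin (d+2), i ≠ 0 → qt 0 (stdE i) = θ * Q i := by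
    intro i hi
    have := qt0_succ 0 (fun i => le_refl 0) i hi
    rw [zero_add] at this
    rw [this, qt0_zero]
    simp
  have qt0_e1 : qt 0 (stdE 0) = 1 := by
    rw [hqt0 _ (by intro j; by_cases hj : j = 0 <;> simp [stdE, hj])]
    apply Finset.prod_eq_one
    intro j hj
    have : j ≠ 0 := (Finset.mem_erase.mp hj).1
    simp [stdE, this, div_self (hGpos j).ne']
  have qt0_smul : ∀ m : ℤ, 0 ≤ m → qt 0 ((m • stdE 0 : Fin (d+2) → ℤ)) = 1 := by
    intro m hm
    rw [hqt0 _ (by intro j; by_cases hj : j = 0 <;> simp [stdE, hj, hm])]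
    apply Finset.prod_eq_one
    intro j hj
    have : j ≠ 0 := (Finset.mem_erase.mp hj).1
    simp [stdE, this, div_self (hGpos j).ne']
  have qt0_pred : ∀ (n : Fin (d+2) → ℤ), IsNatVec n → ∀ i : Fin (d+2), i ≠ 0 → 1 ≤ n i →
      qt 0 n = (θ * Q i + (n i : ℝ) - 1) * qt 0 (n - stdE i) := by
    intro n hn i hi hni
    have hn' : IsNatVec (n - stdE i) := by
      intro j; by_cases hj : j = i <;> simp [stdE, hj] <;> [linarith; exact hn j]
    have := qt0_succ (n - stdE i) hn' i hi
    rw [sub_add_cancel] at this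
    rw [this]
    have : ((n - stdE i) i : ℝ) = (n i : ℝ) - 1 := by
      simp [stdE]
    rw [this]; ring
  have qt0_sub0 : ∀ (n : Fin (d+2) → ℤ), IsNatVec n → 1 ≤ n 0 →
      qt 0 (n - stdE 0) = qt 0 n := by
    intro n hn h0
    have hn' : IsNatVec (n - stdE 0) := by
      intro j; by_cases hj : j = 0 <;> simp [stdE, hj] <;> [linarith; exact hn j]
    rw [hqt0 _ hn', hqt0 _ hn]
    apply Finset.prod_congr rfl
    intro j hj
    have : j ≠ 0 := (Finset.mem_erase.mp hj).1
    simp [stdE, this]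
  have hQe : ∑ i ∈ univ.erase (0 : Fin (d+2)), Q i = 1 - Q 0 := by
    have := Finset.sum_erase_add univ Q (Finset.mem_univ (0 : Fin (d+2)))
    linarith [hQsum]
  have stdE0_at0 : (stdE (0 : Fin (d+2))) 0 = 1 := by simp [stdE]
  have stdEi_at0 : ∀ i : Fin (d+2), i ≠ 0 → (stdE i) 0 = 0 := by
    intro i hi; simp [stdE, Ne.symm hi]
  -- Part (I)
  have partI : ∀ k, qt k (stdE 0) - ((if k = 0 then (1:ℝ) else 0)
      - (if 1 ≤ k then ∑ i ∈ univ.erase 0, qt (k - 1) (stdE i) else 0)) = 0 := by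
    apply seq_cancel s hs0
    intro k
    have pointwise : ∀ m, s (k-m) * (qt m (stdE 0) - ((if m = 0 then (1:ℝ) else 0)
        - (if 1 ≤ m then ∑ i ∈ univ.erase 0, qt (m - 1) (stdE i) else 0)))
        = s (k-m) * qt m (stdE 0) - s (k-m) * (if m = 0 then (1:ℝ) else 0)
          + ∑ i ∈ univ.erase 0, s (k-m) * (if 1 ≤ m then qt (m-1) (stdE i) else 0) := by
      intro m
      rw [show (if 1 ≤ m then ∑ i ∈ univ.erase (0:Fin (d+2)), qt (m-1) (stdE i) else 0)
          = ∑ i ∈ univ.erase (0:Fin (d+2)), (if 1 ≤ m then qt (m-1) (stdE i) else 0) from by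
        split_ifs <;> simp]
      rw [← Finset.mul_sum]
      ring
    rw [Finset.sum_congr rfl (fun m _ => pointwise m)]
    rw [Finset.sum_add_distrib, Finset.sum_sub_distrib, Finset.sum_comm]
    rw [conv, convC]
    rw [Finset.sum_congr rfl (fun i _ => convS (stdE i) k)]
    -- now pure identity
    have hre : ∀ i : Fin (d+2), i ∈ univ.erase (0:Fin (d+2)) →
        (if 1 ≤ k then qt 0 (stdE i) * r (k - 1) (stdE i) else 0)
        = Q i * (if 1 ≤ k then θ * ((1/(((k-1).factorial : ℕ)):ℝ)
            * ascE (k-1) (1 + θ*(1-Q 0)) * ascE (k-1) (1 - θ*Q 0)) else 0) := by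
      intro i hi
      have hi0 : i ≠ 0 := (Finset.mem_erase.mp hi).1
      rw [qt0_e i hi0, hr, tot_stdE, stdEi_at0 i hi0]
      split_ifs
      · simp only [ascE_def]
        push_cast
        ring_nf
      · ring
    rw [Finset.sum_congr rfl hre, ← Finset.sum_mul, hQe, qt0_e1, one_mul, hr, hs,
      tot_stdE, stdE0_at0]
    simp only [ascE_def]
    push_cast
    cases k with
    | zero => simp [ascE_zero]
    | succ K =>
      simp only [Nat.add_sub_cancel, le_add_iff_nonneg_left, zero_le, if_true,
        Nat.factorial_succ]
      rw [show ((1:ℝ) - 1 + θ*(1-Q 0)) = θ*(1-Q 0) from by ring,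
        show ((1:ℝ) - θ*Q 0 - 1) = -(θ*Q 0) from by ring,
        ascE_succ' K (θ*(1-Q 0)), ascE_succ' K (-(θ*Q 0)), ascE_succ K (1 - θ*Q 0)]
      ring_nf
      have hfac : ((K.factorial : ℝ)) ≠ 0 := by positivity
      field_simp
      ring_nf
      push_cast
      ring
  have ha1 : (0:ℝ) < 1 + θ * (1 - Q 0) := by
    have h1 : θ * (1 - Q 0) > 0 := by
      have := hQpos 0
      have h2 : Q 0 < 1 := by
        have := Finset.sum_erase_add univ Q (Finset.mem_univ (0 : Fin (d+2)))
        have hpos : 0 < ∑ i ∈ univ.erase (0:Fin (d+2)), Q i :=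
          Finset.sum_pos (fun i _ => hQpos i) ⟨1, by simp⟩
        linarith [hQsum]
      nlinarith
    linarith
  -- Part (II)
  have partII : ∀ i : Fin (d+2), i ≠ 0 → ∀ k, qt k (stdE i)
      - ((if k = 0 then θ * Q i else 0)
        + (if 1 ≤ k then - θ * qt (k - 1) (stdE i)
            + ∑ j ∈ univ.erase 0, qt (k - 1) (stdE i + stdE j) else 0)) = 0 := by
    intro i hi
    apply seq_cancel s hs0
    intro k
    have pointwise : ∀ m, s (k-m) * (qt m (stdE i)
        - ((if m = 0 then θ * Q i else 0)
          + (if 1 ≤ m then - θ * qt (m - 1) (stdE i)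
              + ∑ j ∈ univ.erase 0, qt (m - 1) (stdE i + stdE j) else 0)))
        = s (k-m) * qt m (stdE i) - s (k-m) * (if m = 0 then θ * Q i else 0)
          + θ * (s (k-m) * (if 1 ≤ m then qt (m-1) (stdE i) else 0))
          - ∑ j ∈ univ.erase 0, s (k-m) * (if 1 ≤ m then qt (m-1) (stdE i + stdE j) else 0) := by
      intro m
      rw [show (if 1 ≤ m then - θ * qt (m - 1) (stdE i)
              + ∑ j ∈ univ.erase 0, qt (m - 1) (stdE i + stdE j) else 0)
          = - θ * (if 1 ≤ m then qt (m-1) (stdE i) else 0)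
            + ∑ j ∈ univ.erase (0:Fin (d+2)), (if 1 ≤ m then qt (m-1) (stdE i + stdE j) else 0) from by
        split_ifs <;> simp]
      rw [← Finset.mul_sum]
      ring
    rw [Finset.sum_congr rfl (fun m _ => pointwise m)]
    rw [Finset.sum_sub_distrib, Finset.sum_add_distrib, Finset.sum_sub_distrib,
      ← Finset.mul_sum, Finset.sum_comm]
    rw [conv, convC, convS]
    rw [Finset.sum_congr rfl (fun j _ => convS (stdE i + stdE j) k)]
    -- values
    have hqe2 : ∀ j : Fin (d+2), j ≠ 0 →
        qt 0 (stdE i + stdE j) = (θ * Q j + (if j = i then 1 else 0)) * (θ * Q i) := by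
      intro j hj
      rw [qt0_succ (stdE i) (by intro l; by_cases hl : l = i <;> simp [stdE, hl]) j hj,
        qt0_e i hi]
      by_cases hji : j = i <;> simp [stdE, hji]
    have hre2 : ∀ j : Fin (d+2), j ≠ 0 → r (k-1) (stdE i + stdE j)
        = (1/(((k-1).factorial : ℕ)):ℝ) * ascE (k-1) (2 + θ*(1-Q 0)) * ascE (k-1) (1 - θ*Q 0) := by
      intro j hj
      rw [hr, tot_add, tot_stdE, tot_stdE]
      rw [show (stdE i + stdE j) 0 = 0 from by simp [stdE, Ne.symm hi, Ne.symm hj]]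
      simp only [ascE_def]
      norm_num
    have hsum2 : ∀ j : Fin (d+2), j ∈ univ.erase (0:Fin (d+2)) →
        (if 1 ≤ k then qt 0 (stdE i + stdE j) * r (k - 1) (stdE i + stdE j) else 0)
        = (θ * Q j + (if j = i then 1 else 0))
          * (if 1 ≤ k then (θ * Q i) * ((1/(((k-1).factorial : ℕ)):ℝ)
              * ascE (k-1) (2 + θ*(1-Q 0)) * ascE (k-1) (1 - θ*Q 0)) else 0) := by
      intro j hj
      have hj0 : j ≠ 0 := (Finset.mem_erase.mp hj).1
      rw [hqe2 j hj0, hre2 j hj0]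
      split_ifs <;> ring
    rw [Finset.sum_congr rfl hsum2, ← Finset.sum_mul, Finset.sum_add_distrib,
      ← Finset.mul_sum, hQe]
    rw [show (∑ j ∈ univ.erase (0:Fin (d+2)), if j = i then (1:ℝ) else 0) = 1 from by
      rw [Finset.sum_ite_eq' (univ.erase (0:Fin (d+2))) i (fun _ => (1:ℝ))]
      simp [Finset.mem_erase, hi]]
    have hrei : ∀ k', r k' (stdE i)
        = (1/((k'.factorial : ℕ)):ℝ) * ascE k' (1 + θ*(1-Q 0)) * ascE k' (1 - θ*Q 0) := by
      intro k'
      rw [hr, tot_stdE, stdEi_at0 i hi]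
      simp only [ascE_def]
      norm_num
    rw [qt0_e i hi, hrei, hrei, hs]
    simp only [ascE_def]
    cases k with
    | zero => simp [ascE_zero]
    | succ K =>
      simp only [Nat.add_sub_cancel, le_add_iff_nonneg_left, zero_le, if_true,
        Nat.factorial_succ]
      have hT : ascE K (2 + θ*(1-Q 0))
          = ascE K (1 + θ*(1-Q 0)) * (1 + θ*(1-Q 0) + K) / (1 + θ*(1-Q 0)) := by
        rw [eq_div_iff ha1.ne']
        have := ascE_shift K (1 + θ*(1-Q 0))
        rw [show (1 + θ*(1-Q 0) + 1) = 2 + θ*(1-Q 0) from by ring] at this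
        linarith [this]
      rw [ascE_succ' K (1 + θ*(1-Q 0)), ascE_succ K (1 - θ*Q 0), ascE_succ' K (θ*(1-Q 0)),
        show (1 + θ*(1-Q 0) + 1) = 2 + θ*(1-Q 0) from by ring,
        show (θ*(1-Q 0) + 1) = 1 + θ*(1-Q 0) from by ring, hT]
      have hfac : ((K.factorial : ℝ)) ≠ 0 := by positivity
      push_cast
      field_simp
      ring_nf
  -- r on multiples of stdE 0
  have hrm : ∀ k' : ℕ, ∀ m : ℤ, r k' ((m • stdE 0 : Fin (d+2) → ℤ))
      = (1/((k'.factorial : ℕ)):ℝ) * ascE k' (θ*(1-Q 0)) * ascE k' (1 - θ*Q 0 - (m:ℝ)) := by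
    intro k' m
    rw [hr, tot_smul, show (m • stdE 0 : Fin (d+2) → ℤ) 0 = m from by simp [stdE]]
    simp only [ascE_def]
    ring_nf
  -- Part (III)
  have partIII : ∀ n₁ : ℤ, 1 < n₁ → ∀ k, qt k ((n₁ • stdE 0 : Fin (d+2) → ℤ))
      - (qt k (((n₁ - 1) • stdE 0 : Fin (d+2) → ℤ))
        - (if 1 ≤ k then ((n₁ : ℝ) - 2 + θ) * qt (k - 1) (((n₁-1) • stdE 0 : Fin (d+2) → ℤ)) else 0)
        + (if 1 ≤ k then ((n₁ : ℝ) - 2 + θ * Q 0) * qt (k - 1) (((n₁-2) • stdE 0 : Fin (d+2) → ℤ))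
           else 0)) = 0 := by
    intro n₁ hn₁
    apply seq_cancel s hs0
    intro k
    have pointwise : ∀ m, s (k-m) * (qt m ((n₁ • stdE 0 : Fin (d+2) → ℤ))
        - (qt m (((n₁ - 1) • stdE 0 : Fin (d+2) → ℤ))
          - (if 1 ≤ m then ((n₁ : ℝ) - 2 + θ) * qt (m - 1) (((n₁-1) • stdE 0 : Fin (d+2) → ℤ)) else 0)
          + (if 1 ≤ m then ((n₁ : ℝ) - 2 + θ * Q 0) * qt (m - 1) (((n₁-2) • stdE 0 : Fin (d+2) → ℤ))
             else 0)))
        = s (k-m) * qt m ((n₁ • stdE 0 : Fin (d+2) → ℤ))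
          - s (k-m) * qt m (((n₁ - 1) • stdE 0 : Fin (d+2) → ℤ))
          + ((n₁ : ℝ) - 2 + θ) * (s (k-m) * (if 1 ≤ m then qt (m-1) (((n₁-1) • stdE 0 : Fin (d+2) → ℤ)) else 0))
          - ((n₁ : ℝ) - 2 + θ * Q 0) * (s (k-m) * (if 1 ≤ m then qt (m-1) (((n₁-2) • stdE 0 : Fin (d+2) → ℤ)) else 0)) := by
      intro m
      rw [show (if 1 ≤ m then ((n₁ : ℝ) - 2 + θ) * qt (m - 1) (((n₁-1) • stdE 0 : Fin (d+2) → ℤ)) else 0)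
          = ((n₁ : ℝ) - 2 + θ) * (if 1 ≤ m then qt (m-1) (((n₁-1) • stdE 0 : Fin (d+2) → ℤ)) else 0) from by
        split_ifs <;> simp]
      rw [show (if 1 ≤ m then ((n₁ : ℝ) - 2 + θ * Q 0) * qt (m - 1) (((n₁-2) • stdE 0 : Fin (d+2) → ℤ)) else 0)
          = ((n₁ : ℝ) - 2 + θ * Q 0) * (if 1 ≤ m then qt (m-1) (((n₁-2) • stdE 0 : Fin (d+2) → ℤ)) else 0) from by
        split_ifs <;> simp]
      ring
    rw [Finset.sum_congr rfl (fun m _ => pointwise m)]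
    rw [Finset.sum_sub_distrib, Finset.sum_add_distrib, Finset.sum_sub_distrib,
      ← Finset.mul_sum, ← Finset.mul_sum]
    rw [conv, conv, convS, convS]
    rw [qt0_smul n₁ (by omega), qt0_smul (n₁-1) (by omega), qt0_smul (n₁-2) (by omega)]
    rw [hrm, hrm, hrm, hrm]
    push_cast
    cases k with
    | zero => simp [ascE_zero]
    | succ K =>
      simp only [Nat.add_sub_cancel, le_add_iff_nonneg_left, zero_le, if_true]
      have hsh : ((2:ℝ) - θ*Q 0 - (n₁:ℝ)) * ascE K (3 - θ*Q 0 - (n₁:ℝ))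
          = ascE K (2 - θ*Q 0 - (n₁:ℝ)) * ((2 - θ*Q 0 - (n₁:ℝ)) + K) := by
        have := ascE_shift K (2 - θ*Q 0 - (n₁:ℝ))
        rw [show ((2:ℝ) - θ*Q 0 - (n₁:ℝ) + 1) = 3 - θ*Q 0 - (n₁:ℝ) from by ring] at this
        linarith
      rw [ascE_succ K (θ*(1-Q 0)),
        ascE_succ' K (1 - θ*Q 0 - (n₁:ℝ)),
        show ((1:ℝ) - θ*Q 0 - (n₁:ℝ) + 1) = 2 - θ*Q 0 - (n₁:ℝ) from by ring,
        ascE_succ K (1 - θ*Q 0 - ((n₁:ℝ)-1)),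
        show ((1:ℝ) - θ*Q 0 - ((n₁:ℝ)-1)) = 2 - θ*Q 0 - (n₁:ℝ) from by ring,
        show ((1:ℝ) - θ*Q 0 - ((n₁:ℝ)-2)) = 3 - θ*Q 0 - (n₁:ℝ) from by ring]
      push_cast
      have hfac : ((K.factorial : ℝ)) ≠ 0 := by positivity
      have hc : (1/((((K+1).factorial : ℕ)):ℝ)) * ((K:ℝ)+1) = 1/(((K.factorial : ℕ)):ℝ) := by
        rw [Nat.factorial_succ]
        push_cast
        field_simp
      linear_combination ((1/(((K.factorial : ℕ)):ℝ)) * ascE K (θ*(1-Q 0))) * hsh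
        - (ascE K (θ*(1-Q 0)) * ascE K (2 - θ*Q 0 - (n₁:ℝ)) * (θ*(1-Q 0)+(K:ℝ))) * hc
  -- Part (IV)
  have partIV : ∀ n : Fin (d+2) → ℤ, IsNatVec n → 1 < tot n → ∀ k,
      ((tot n : ℝ) - (n 0 : ℝ)) * qt k n
      - ((∑ i ∈ univ.erase 0,
            (n i : ℝ) * ((n i : ℝ) - 1 + θ * Q i) * qt k (n - stdE i))
          + (if 1 ≤ k then
              - (tot n : ℝ) * ((tot n : ℝ) - 1 + θ) * qt (k - 1) n
              + (n 0 : ℝ) * ((n 0 : ℝ) - 1 + θ * Q 0) * qt (k - 1) (n - stdE 0)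
              + (tot n : ℝ) * ∑ i ∈ univ.erase 0, qt (k - 1) (n + stdE i)
            else 0)) = 0 := by
    intro n hn hN
    apply seq_cancel s hs0
    intro k
    have pointwise : ∀ m, s (k-m) * (((tot n : ℝ) - (n 0 : ℝ)) * qt m n
        - ((∑ i ∈ univ.erase 0,
              (n i : ℝ) * ((n i : ℝ) - 1 + θ * Q i) * qt m (n - stdE i))
            + (if 1 ≤ m then
                - (tot n : ℝ) * ((tot n : ℝ) - 1 + θ) * qt (m - 1) n
                + (n 0 : ℝ) * ((n 0 : ℝ) - 1 + θ * Q 0) * qt (m - 1) (n - stdE 0)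
                + (tot n : ℝ) * ∑ i ∈ univ.erase 0, qt (m - 1) (n + stdE i)
              else 0)))
        = ((tot n : ℝ) - (n 0 : ℝ)) * (s (k-m) * qt m n)
          - (∑ i ∈ univ.erase 0, (n i : ℝ) * ((n i : ℝ) - 1 + θ * Q i)
              * (s (k-m) * qt m (n - stdE i)))
          + (tot n : ℝ) * ((tot n : ℝ) - 1 + θ)
              * (s (k-m) * (if 1 ≤ m then qt (m-1) n else 0))
          - (n 0 : ℝ) * ((n 0 : ℝ) - 1 + θ * Q 0)
              * (s (k-m) * (if 1 ≤ m then qt (m-1) (n - stdE 0) else 0))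
          - (tot n : ℝ) * ∑ i ∈ univ.erase 0,
              (s (k-m) * (if 1 ≤ m then qt (m-1) (n + stdE i) else 0)) := by
      intro m
      rw [show (if 1 ≤ m then
                - (tot n : ℝ) * ((tot n : ℝ) - 1 + θ) * qt (m - 1) n
                + (n 0 : ℝ) * ((n 0 : ℝ) - 1 + θ * Q 0) * qt (m - 1) (n - stdE 0)
                + (tot n : ℝ) * ∑ i ∈ univ.erase 0, qt (m - 1) (n + stdE i)
              else 0)
          = - (tot n : ℝ) * ((tot n : ℝ) - 1 + θ) * (if 1 ≤ m then qt (m-1) n else 0)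
            + (n 0 : ℝ) * ((n 0 : ℝ) - 1 + θ * Q 0)
                * (if 1 ≤ m then qt (m-1) (n - stdE 0) else 0)
            + (tot n : ℝ) * ∑ i ∈ univ.erase (0 : Fin (d+2)),
                (if 1 ≤ m then qt (m-1) (n + stdE i) else 0) from by
        split_ifs <;> simp [Finset.mul_sum]]
      have h1 : ∑ i ∈ univ.erase (0:Fin (d+2)), (n i : ℝ) * ((n i : ℝ) - 1 + θ * Q i)
            * (s (k-m) * qt m (n - stdE i))
          = s (k-m) * ∑ i ∈ univ.erase (0:Fin (d+2)),
              (n i : ℝ) * ((n i : ℝ) - 1 + θ * Q i) * qt m (n - stdE i) := by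
        rw [Finset.mul_sum]; exact Finset.sum_congr rfl (fun i _ => by ring)
      have h2 : ∑ i ∈ univ.erase (0:Fin (d+2)),
            (s (k-m) * (if 1 ≤ m then qt (m-1) (n + stdE i) else 0))
          = s (k-m) * ∑ i ∈ univ.erase (0:Fin (d+2)),
              (if 1 ≤ m then qt (m-1) (n + stdE i) else 0) := by
        rw [Finset.mul_sum]
      rw [h1, h2]
      ring
    rw [Finset.sum_congr rfl (fun m _ => pointwise m)]
    simp only [Finset.sum_sub_distrib, Finset.sum_add_distrib]
    rw [← Finset.mul_sum, conv]
    rw [Finset.sum_comm]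
    rw [Finset.sum_congr rfl (fun i (_ : i ∈ univ.erase (0:Fin (d+2))) =>
      show ∑ m ∈ range (k+1), (n i : ℝ) * ((n i : ℝ) - 1 + θ * Q i)
          * (s (k-m) * qt m (n - stdE i))
        = (n i : ℝ) * ((n i : ℝ) - 1 + θ * Q i) * (qt 0 (n - stdE i) * r k (n - stdE i)) from by
      rw [← Finset.mul_sum, conv])]
    rw [← Finset.mul_sum, convS]
    rw [← Finset.mul_sum, convS]
    rw [← Finset.mul_sum]
    rw [Finset.sum_comm]
    rw [Finset.sum_congr rfl (fun i (_ : i ∈ univ.erase (0:Fin (d+2))) => convS (n + stdE i) k)]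
    -- value lemmas
    have hrd : ∀ k' : ℕ, ∀ i : Fin (d+2), i ≠ 0 → r k' (n - stdE i)
        = (1/((k'.factorial:ℕ)):ℝ) * ascE k' ((tot n : ℝ) - (n 0:ℝ) + θ*(1-Q 0) - 1)
          * ascE k' (1 - θ*Q 0 - (n 0:ℝ)) := by
      intro k' i hi
      rw [hr, tot_sub, tot_stdE, show (n - stdE i) 0 = n 0 from by simp [stdE, Ne.symm hi]]
      simp only [ascE_def]; push_cast; ring_nf
    have hru : ∀ k' : ℕ, ∀ i : Fin (d+2), i ≠ 0 → r k' (n + stdE i)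
        = (1/((k'.factorial:ℕ)):ℝ) * ascE k' ((tot n : ℝ) - (n 0:ℝ) + θ*(1-Q 0) + 1)
          * ascE k' (1 - θ*Q 0 - (n 0:ℝ)) := by
      intro k' i hi
      rw [hr, tot_add, tot_stdE, show (n + stdE i) 0 = n 0 from by simp [stdE, Ne.symm hi]]
      simp only [ascE_def]; push_cast; ring_nf
    have hrz : ∀ k' : ℕ, r k' (n - stdE 0)
        = (1/((k'.factorial:ℕ)):ℝ) * ascE k' ((tot n : ℝ) - (n 0:ℝ) + θ*(1-Q 0))
          * ascE k' (1 - θ*Q 0 - (n 0:ℝ) + 1) := by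
      intro k'
      have hv : ((n - stdE 0 : Fin (d+2) → ℤ)) 0 = n 0 - 1 := by simp [stdE]
      rw [hr, tot_sub, tot_stdE, hv]
      simp only [ascE_def]; push_cast; ring_nf
    have hrn : ∀ k' : ℕ, r k' n
        = (1/((k'.factorial:ℕ)):ℝ) * ascE k' ((tot n : ℝ) - (n 0:ℝ) + θ*(1-Q 0))
          * ascE k' (1 - θ*Q 0 - (n 0:ℝ)) := by
      intro k'; rw [hr]; simp only [ascE_def]
    have hsumn : (∑ i ∈ univ.erase (0:Fin (d+2)), ((n i : ℤ):ℝ)) = (tot n:ℝ) - (n 0:ℝ) := by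
      have h1 : ∑ i ∈ univ.erase (0:Fin (d+2)), n i + n 0 = tot n :=
        Finset.sum_erase_add univ (fun j => n j) (Finset.mem_univ (0:Fin (d+2)))
      have h2 : ((∑ i ∈ univ.erase (0:Fin (d+2)), n i : ℤ):ℝ)
          = ∑ i ∈ univ.erase (0:Fin (d+2)), ((n i : ℤ):ℝ) := by push_cast; rfl
      rw [← h2, show (∑ i ∈ univ.erase (0:Fin (d+2)), n i) = tot n - n 0 from by omega]
      push_cast; ring
    have hterm1 : ∀ i : Fin (d+2), i ∈ univ.erase (0:Fin (d+2)) →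
        (n i : ℝ) * ((n i : ℝ) - 1 + θ * Q i) * (qt 0 (n - stdE i) * r k (n - stdE i))
        = (n i : ℝ) * (qt 0 n * ((1/((k.factorial:ℕ)):ℝ)
            * ascE k ((tot n : ℝ) - (n 0:ℝ) + θ*(1-Q 0) - 1)
            * ascE k (1 - θ*Q 0 - (n 0:ℝ)))) := by
      intro i hii
      have hi : i ≠ 0 := (Finset.mem_erase.mp hii).1
      rcases eq_or_lt_of_le (hn i) with h0 | h1
      · rw [← h0]; norm_num
      · rw [hrd k i hi, qt0_pred n hn i hi h1]
        ring
    have hterm3 : ∀ i : Fin (d+2), i ∈ univ.erase (0:Fin (d+2)) →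
        (if 1 ≤ k then qt 0 (n + stdE i) * r (k-1) (n + stdE i) else 0)
        = (θ * Q i + (n i : ℝ)) * (if 1 ≤ k then qt 0 n * ((1/(((k-1).factorial:ℕ)):ℝ)
            * ascE (k-1) ((tot n : ℝ) - (n 0:ℝ) + θ*(1-Q 0) + 1)
            * ascE (k-1) (1 - θ*Q 0 - (n 0:ℝ))) else 0) := by
      intro i hii
      have hi : i ≠ 0 := (Finset.mem_erase.mp hii).1
      rw [qt0_succ n hn i hi, hru (k-1) i hi]
      split_ifs <;> ring
    have hterm0 : (n 0:ℝ) * ((n 0:ℝ) - 1 + θ * Q 0)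
          * (if 1 ≤ k then qt 0 (n - stdE 0) * r (k-1) (n - stdE 0) else 0)
        = (n 0:ℝ) * ((n 0:ℝ) - 1 + θ * Q 0)
          * (if 1 ≤ k then qt 0 n * ((1/(((k-1).factorial:ℕ)):ℝ)
              * ascE (k-1) ((tot n : ℝ) - (n 0:ℝ) + θ*(1-Q 0))
              * ascE (k-1) (1 - θ*Q 0 - (n 0:ℝ) + 1)) else 0) := by
      rcases eq_or_lt_of_le (hn 0) with h0 | h1
      · rw [← h0]; norm_num
      · rw [hrz (k-1), qt0_sub0 n hn h1]
    rw [Finset.sum_congr rfl hterm1, ← Finset.sum_mul, hsumn]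
    rw [Finset.sum_congr rfl hterm3, ← Finset.sum_mul, Finset.sum_add_distrib,
      ← Finset.mul_sum, hQe, hsumn]
    rw [hterm0, hrn k, hrn (k-1)]
    cases k with
    | zero => norm_num [ascE_zero]
    | succ K =>
      simp only [Nat.add_sub_cancel, le_add_iff_nonneg_left, zero_le, if_true]
      have hshu := ascE_shift K ((tot n : ℝ) - (n 0:ℝ) + θ*(1-Q 0))
      have hshv := ascE_shift K (1 - θ*Q 0 - (n 0:ℝ))
      have hfac : ((K.factorial : ℝ)) ≠ 0 := by positivity
      have hc : (1/((((K+1).factorial : ℕ)):ℝ)) * ((K:ℝ)+1) = 1/(((K.factorial : ℕ)):ℝ) := by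
        rw [Nat.factorial_succ]
        push_cast
        field_simp
      rw [ascE_succ K ((tot n : ℝ) - (n 0:ℝ) + θ*(1-Q 0)),
        ascE_succ K (1 - θ*Q 0 - (n 0:ℝ)),
        ascE_succ' K ((tot n : ℝ) - (n 0:ℝ) + θ*(1-Q 0) - 1),
        show ((tot n : ℝ) - (n 0:ℝ) + θ*(1-Q 0) - 1 + 1)
          = (tot n : ℝ) - (n 0:ℝ) + θ*(1-Q 0) from by ring]
      linear_combination
        (qt 0 n * (1/(((K.factorial : ℕ)):ℝ))
          * ascE K ((tot n : ℝ) - (n 0:ℝ) + θ*(1-Q 0)) * (n 0 : ℝ)) * hshv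
        - (qt 0 n * (1/(((K.factorial : ℕ)):ℝ)) * (tot n : ℝ)
          * ascE K (1 - θ*Q 0 - (n 0:ℝ))) * hshu
        + (qt 0 n * ((tot n : ℝ) - (n 0:ℝ))
          * (1 - θ*Q 0 - (n 0:ℝ) + (K:ℝ))
          * ascE K ((tot n : ℝ) - (n 0:ℝ) + θ*(1-Q 0))
          * ascE K (1 - θ*Q 0 - (n 0:ℝ))) * hc
  refine ⟨?_, ?_, ?_, ?_⟩
  · have := partI k; linarith
  · intro i hi; have := partII i hi k; linarith
  · intro n₁ hn₁; have := partIII n₁ hn₁ k; linarith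
  · intro n hn hN; have := partIV n hn hN k; linarith
end
end

section
/- Assume P_{1i} > 0 for i = 2,…,d. Let q^{(σ)} be a family of sampling probabilities and let q̃_k (k ∈ ℕ) be a family of asymptotic-expansion coefficients for q^{(σ)}. Then for every m ∈ ℕ^d ∖ {0} the following limits hold as σ → ∞: (i) if m_1 ≥ 1, then q^{(σ)}(m − e_1)/q^{(σ)}(m) → 1; (ii) for every i = 2,…,d with m_i ≥ 1, σ^{-1} q^{(σ)}(m − e_i)/q^{(σ)}(m) → 1/(m_i − 1 + θP_{1i}); (iii) for every i = 2,…,d, σ q^{(σ)}(m + e_i)/q^{(σ)}(m) → m_i + θP_{1i}. (These are the leading-order asymptotics of the ratios of sampling probabilities governing the jump rates of the reduced conditional ancestral selection graph under strong selection.) -/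
open Finset Filter Asymptotics

noncomputable section

section Aux
variable {d : ℕ} {θ : ℝ} {P : Fin (d + 2) → Fin (d + 2) → ℝ}
  {q : ℝ → (Fin (d + 2) → ℤ) → ℝ} {qt : ℕ → (Fin (d + 2) → ℤ) → ℝ}

lemma my_tot_add (n : Fin (d+2) → ℤ) (i : Fin (d+2)) : tot (n + stdE i) = tot n + 1 := by
  simp [tot, stdE, Finset.sum_add_distrib]

lemma my_tot_sub (n : Fin (d+2) → ℤ) (i : Fin (d+2)) : tot (n - stdE i) = tot n - 1 := by
  simp [tot, stdE, Finset.sum_sub_distrib]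

lemma limA (hqt : IsExpansionCoeffs q qt) (n : Fin (d+2) → ℤ) (hn : IsNatVec n) :
    Tendsto (fun σ : ℝ => σ ^ (tot n - n 0) * q σ n) atTop (nhds (qt 0 n)) := by
  have h := hqt.2.2.2 n hn 0
  simp only [Finset.sum_range_one, Nat.cast_zero, neg_zero, zpow_zero, mul_one] at h
  have h0 : Tendsto (fun σ : ℝ => σ ^ (-(0 + 1 : ℤ))) atTop (nhds 0) :=
    tendsto_zpow_atTop_zero (by norm_num)
  have h1 := h.trans_tendsto h0
  have h2 := h1.add (tendsto_const_nhds (x := qt 0 n) (f := atTop))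
  simpa using h2

lemma limLT (hqt : IsExpansionCoeffs q qt) (n : Fin (d+2) → ℤ) (hn : IsNatVec n)
    (a : ℤ) (ha : a < tot n - n 0) :
    Tendsto (fun σ : ℝ => σ ^ a * q σ n) atTop (nhds 0) := by
  have h1 := limA hqt n hn
  have h2 : Tendsto (fun σ : ℝ => σ ^ (a - (tot n - n 0))) atTop (nhds 0) :=
    tendsto_zpow_atTop_zero (by omega)
  have h3 := h2.mul h1
  rw [zero_mul] at h3
  refine h3.congr' ?_
  filter_upwards [eventually_ge_atTop 1] with σ hσ
  have hσ0 : σ ≠ 0 := by positivity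
  rw [← mul_assoc, ← zpow_add₀ hσ0, sub_add_cancel]

lemma limNeg (hq : IsSamplingFamily θ P q) (n : Fin (d+2) → ℤ) (hn : ∃ i, n i < 0) (a : ℤ) :
    Tendsto (fun σ : ℝ => σ ^ a * q σ n) atTop (nhds 0) := by
  refine tendsto_const_nhds.congr' ?_
  filter_upwards [eventually_gt_atTop 0] with σ hσ
  rw [hq.2.1 σ hσ n hn, mul_zero]
end Aux

section Aux
variable {d : ℕ} {θ : ℝ} {P : Fin (d + 2) → Fin (d + 2) → ℝ}
  {q : ℝ → (Fin (d + 2) → ℤ) → ℝ} {qt : ℕ → (Fin (d + 2) → ℤ) → ℝ}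

lemma natvec_sub (n : Fin (d+2) → ℤ) (hn : IsNatVec n) (i : Fin (d+2)) (hi : 1 ≤ n i) :
    IsNatVec (n - stdE i) := by
  intro j
  by_cases h : j = i <;> simp [stdE, h, Pi.sub_apply]
  · have := hn i; omega
  · exact hn j

lemma natvec_add (n : Fin (d+2) → ℤ) (hn : IsNatVec n) (i : Fin (d+2)) :
    IsNatVec (n + stdE i) := by
  intro j
  by_cases h : j = i <;> simp [stdE, h, Pi.add_apply]
  · have := hn i; omega
  · exact hn j

lemma limB (hq : IsSamplingFamily θ P q) (hqt : IsExpansionCoeffs q qt)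
    (n : Fin (d+2) → ℤ) (hn : IsNatVec n) (i : Fin (d+2)) (hi : i ≠ 0) :
    Tendsto (fun σ : ℝ => σ ^ (tot n - n 0 - 1) * q σ (n - stdE i)) atTop
      (nhds (qt 0 (n - stdE i))) := by
  have h0i : (0 : Fin (d+2)) ≠ i := Ne.symm hi
  by_cases h : 1 ≤ n i
  · have hnat := natvec_sub n hn i h
    have hE : tot (n - stdE i) - (n - stdE i) 0 = tot n - n 0 - 1 := by
      rw [my_tot_sub]; simp [stdE, h0i]; ring
    have := limA hqt _ hnat
    rwa [hE] at this
  · have hneg : ∃ j, (n - stdE i) j < 0 := ⟨i, by simp [stdE]; omega⟩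
    rw [hqt.2.2.1 0 _ hneg]
    exact limNeg hq _ hneg _

lemma stepB (hq : IsSamplingFamily θ P q) (hqt : IsExpansionCoeffs q qt)
    (n : Fin (d+2) → ℤ) (hn : IsNatVec n) : qt 0 (n + stdE (0 : Fin (d+2))) = qt 0 n := by
  have hE0 : tot (n + stdE (0 : Fin (d+2))) - (n + stdE (0 : Fin (d+2))) 0 = tot n - n 0 := by
    rw [my_tot_add]; simp [stdE]
  have h1 : Tendsto (fun σ : ℝ => σ ^ (tot n - n 0) * q σ (n + stdE (0 : Fin (d+2)))) atTop
      (nhds (qt 0 (n + stdE (0 : Fin (d+2))))) := by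
    have := limA hqt _ (natvec_add n hn 0); rwa [hE0] at this
  have h2 : Tendsto (fun σ : ℝ => σ ^ (tot n - n 0) * q σ n
      - ∑ i ∈ univ.erase (0 : Fin (d+2)), σ ^ (tot n - n 0) * q σ (n + stdE i)) atTop
      (nhds (qt 0 n - ∑ i ∈ univ.erase (0 : Fin (d+2)), (0:ℝ))) := by
    refine (limA hqt n hn).sub (tendsto_finset_sum _ fun i hi => ?_)
    have hi0 : i ≠ 0 := (Finset.mem_erase.mp hi).1
    refine limLT hqt _ (natvec_add n hn i) _ ?_
    rw [my_tot_add]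
    simp [stdE, Ne.symm hi0]
  simp only [Finset.sum_const_zero, sub_zero] at h2
  refine tendsto_nhds_unique (h1.congr' ?_) h2
  filter_upwards [eventually_gt_atTop 0] with σ hσ
  have hcons := hq.2.2.1 σ hσ n hn
  rw [← Finset.add_sum_erase univ (fun i => q σ (n + stdE i)) (mem_univ (0 : Fin (d+2)))] at hcons
  rw [← Finset.mul_sum, ← mul_sub]
  congr 1
  linarith
end Aux

section Aux
variable {d : ℕ} {θ : ℝ} {P : Fin (d + 2) → Fin (d + 2) → ℝ}
  {q : ℝ → (Fin (d + 2) → ℤ) → ℝ} {qt : ℕ → (Fin (d + 2) → ℤ) → ℝ}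

lemma hc1aux (hq : IsSamplingFamily θ P q) (hqt : IsExpansionCoeffs q qt)
    (n : Fin (d+2) → ℤ) (hn : IsNatVec n) (i : Fin (d+2)) :
    Tendsto (fun σ : ℝ => σ ^ (tot n - n 0 - 1) * q σ (n - stdE i)) atTop
      (nhds (if i = 0 then 0 else qt 0 (n - stdE i))) := by
  by_cases hi : i = 0
  · subst hi; simp only [if_pos rfl]
    by_cases h0 : 1 ≤ n 0
    · refine limLT hqt _ (natvec_sub n hn 0 h0) _ ?_
      rw [my_tot_sub]; simp [stdE]
    · exact limNeg hq _ ⟨0, by simp [stdE]; omega⟩ _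
  · simp only [if_neg hi]; exact limB hq hqt n hn i hi

lemma hc2aux (hq : IsSamplingFamily θ P q) (hqt : IsExpansionCoeffs q qt)
    (n : Fin (d+2) → ℤ) (hn : IsNatVec n) (i j : Fin (d+2)) :
    Tendsto (fun σ : ℝ => σ ^ (tot n - n 0 - 1) * q σ (n - stdE i + stdE j)) atTop
      (nhds (if i ≠ 0 ∧ j = 0 then qt 0 (n - stdE i + stdE j) else 0)) := by
  by_cases hi : i = 0
  · subst hi
    simp only [ne_eq, not_true_eq_false, false_and, if_false]
    by_cases hj : j = 0
    · subst hj
      have hv : n - stdE (0 : Fin (d+2)) + stdE (0 : Fin (d+2)) = n := sub_add_cancel n _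
      rw [hv]
      exact limLT hqt n hn _ (by omega)
    · by_cases h0 : 1 ≤ n 0
      · refine limLT hqt _ (natvec_add _ (natvec_sub n hn 0 h0) j) _ ?_
        rw [my_tot_add, my_tot_sub]
        simp [stdE, Ne.symm hj]
        omega
      · exact limNeg hq _ ⟨0, by simp [stdE, Ne.symm hj]; omega⟩ _
  · have h0i : (0 : Fin (d+2)) ≠ i := Ne.symm hi
    by_cases hj : j = 0
    · subst hj
      simp only [ne_eq, hi, not_false_eq_true, and_self, if_true]
      by_cases hni : 1 ≤ n i
      · have hnat := natvec_add _ (natvec_sub n hn i hni) (0 : Fin (d+2))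
        have hE : tot (n - stdE i + stdE (0 : Fin (d+2)))
            - (n - stdE i + stdE (0 : Fin (d+2))) 0 = tot n - n 0 - 1 := by
          rw [my_tot_add, my_tot_sub]; simp [stdE, h0i]; omega
        have := limA hqt _ hnat; rwa [hE] at this
      · have hneg : ∃ k, (n - stdE i + stdE (0 : Fin (d+2))) k < 0 :=
          ⟨i, by simp [stdE, hi]; omega⟩
        rw [hqt.2.2.1 0 _ hneg]; exact limNeg hq _ hneg _
    · simp only [ne_eq, hj, and_false, if_false]
      by_cases hij : i = j
      · subst hij
        have hv : n - stdE i + stdE i = n := sub_add_cancel n _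
        rw [hv]
        exact limLT hqt n hn _ (by omega)
      · by_cases hni : 1 ≤ n i
        · refine limLT hqt _ (natvec_add _ (natvec_sub n hn i hni) j) _ ?_
          rw [my_tot_add, my_tot_sub]
          simp [stdE, h0i, Ne.symm hj]
        · exact limNeg hq _ ⟨i, by simp [stdE, hij]; omega⟩ _

end Aux

section Aux
variable {d : ℕ} {θ : ℝ} {P : Fin (d + 2) → Fin (d + 2) → ℝ}
  {q : ℝ → (Fin (d + 2) → ℤ) → ℝ} {qt : ℕ → (Fin (d + 2) → ℤ) → ℝ}

lemma stepC (hq : IsSamplingFamily θ P q) (hqt : IsExpansionCoeffs q qt)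
    (n : Fin (d+2) → ℤ) (hn : IsNatVec n) (hs : 1 ≤ tot n - n 0) :
    ((tot n : ℝ) - (n 0 : ℝ)) * qt 0 n =
      ∑ i ∈ univ.erase (0 : Fin (d+2)),
        (n i : ℝ) * ((n i : ℝ) - 1 + θ * P 0 i) * qt 0 (n - stdE i) := by
  have hn0 : n ≠ 0 := by
    intro h; subst h; simp [tot] at hs
  -- the two sides of the recursion, multiplied by σ^(s-1)
  set L : ℝ → ℝ := fun σ =>
    σ ^ (tot n - n 0 - 1) *
      (((tot n : ℝ) * ((tot n : ℝ) - 1 + θ) + ((tot n : ℝ) - (n 0 : ℝ)) * σ) * q σ n)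
    with hLdef
  set R : ℝ → ℝ := fun σ =>
    σ ^ (tot n - n 0 - 1) *
      ((∑ i, (n i : ℝ) * ((n i : ℝ) - 1) * q σ (n - stdE i))
      + (∑ i, ∑ j, (n i : ℝ) * θ * P j i * q σ (n - stdE i + stdE j))
      + σ * (tot n : ℝ) * ∑ i ∈ univ.erase (0 : Fin (d+2)), q σ (n + stdE i))
    with hRdef
  have hLR : L =ᶠ[atTop] R := by
    filter_upwards [eventually_gt_atTop 0] with σ hσ
    exact congrArg _ (hq.2.2.2 σ hσ n hn hn0)
  -- limit of L
  have hLt : Tendsto L atTop (nhds (((tot n : ℝ) - (n 0 : ℝ)) * qt 0 n)) := by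
    have t1 : Tendsto (fun σ : ℝ => σ ^ (tot n - n 0 - 1) * q σ n) atTop (nhds 0) :=
      limLT hqt n hn _ (by omega)
    have t2 := limA hqt n hn
    have h := ((tendsto_const_nhds
        (x := (tot n : ℝ) * ((tot n : ℝ) - 1 + θ)) (f := atTop)).mul t1).add
      ((tendsto_const_nhds (x := (tot n : ℝ) - (n 0 : ℝ)) (f := atTop)).mul t2)
    rw [mul_zero, zero_add] at h
    refine h.congr' ?_
    filter_upwards [eventually_ge_atTop 1] with σ hσ
    have hσ0 : σ ≠ 0 := by positivity
    have hz : σ ^ (tot n - n 0 - 1) * σ = σ ^ (tot n - n 0) := by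
      rw [zpow_sub_one₀ hσ0, mul_assoc, inv_mul_cancel₀ hσ0, mul_one]
    rw [hLdef]
    simp only
    rw [← hz]
    ring
  -- limit of R
  have hRt : Tendsto R atTop
      (nhds ((∑ i, (n i : ℝ) * ((n i : ℝ) - 1) * (if i = 0 then 0 else qt 0 (n - stdE i)))
        + (∑ i, ∑ j, (n i : ℝ) * θ * P j i *
            (if i ≠ 0 ∧ j = 0 then qt 0 (n - stdE i + stdE j) else 0))
        + (tot n : ℝ) * ∑ _i ∈ univ.erase (0 : Fin (d+2)), (0 : ℝ))) := by
    have h1 : Tendsto (fun σ : ℝ =>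
        ∑ i, (n i : ℝ) * ((n i : ℝ) - 1) * (σ ^ (tot n - n 0 - 1) * q σ (n - stdE i)))
        atTop (nhds (∑ i, (n i : ℝ) * ((n i : ℝ) - 1) *
          (if i = 0 then 0 else qt 0 (n - stdE i)))) :=
      tendsto_finset_sum _ fun i _ => tendsto_const_nhds.mul (hc1aux hq hqt n hn i)
    have h2 : Tendsto (fun σ : ℝ =>
        ∑ i, ∑ j, (n i : ℝ) * θ * P j i * (σ ^ (tot n - n 0 - 1) * q σ (n - stdE i + stdE j)))
        atTop (nhds (∑ i, ∑ j, (n i : ℝ) * θ * P j i *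
          (if i ≠ 0 ∧ j = 0 then qt 0 (n - stdE i + stdE j) else 0))) :=
      tendsto_finset_sum _ fun i _ => tendsto_finset_sum _ fun j _ =>
        tendsto_const_nhds.mul (hc2aux hq hqt n hn i j)
    have h3 : Tendsto (fun σ : ℝ =>
        (tot n : ℝ) * ∑ i ∈ univ.erase (0 : Fin (d+2)), σ ^ (tot n - n 0) * q σ (n + stdE i))
        atTop (nhds ((tot n : ℝ) * ∑ _i ∈ univ.erase (0 : Fin (d+2)), (0 : ℝ))) := by
      refine tendsto_const_nhds.mul (tendsto_finset_sum _ fun i hi => ?_)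
      have hi0 : i ≠ 0 := (Finset.mem_erase.mp hi).1
      refine limLT hqt _ (natvec_add n hn i) _ ?_
      rw [my_tot_add]
      simp [stdE, Ne.symm hi0]
    refine ((h1.add h2).add h3).congr' ?_
    filter_upwards [eventually_ge_atTop 1] with σ hσ
    have hσ0 : σ ≠ 0 := by positivity
    have hz : σ ^ (tot n - n 0 - 1) * σ = σ ^ (tot n - n 0) := by
      rw [zpow_sub_one₀ hσ0, mul_assoc, inv_mul_cancel₀ hσ0, mul_one]
    rw [hRdef]
    simp only
    rw [mul_add, mul_add]
    congr 1
    · congr 1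
      · rw [Finset.mul_sum]; exact Finset.sum_congr rfl fun i _ => by ring
      · rw [Finset.mul_sum]
        refine Finset.sum_congr rfl fun i _ => ?_
        rw [Finset.mul_sum]; exact Finset.sum_congr rfl fun j _ => by ring
    · rw [← Finset.mul_sum, ← hz]; ring
  have hval := tendsto_nhds_unique (hLt.congr' hLR) hRt
  simp only [Finset.sum_const_zero, mul_zero, add_zero] at hval
  have e1 : (∑ i, (n i : ℝ) * ((n i : ℝ) - 1) * (if i = 0 then 0 else qt 0 (n - stdE i)))
      = ∑ i ∈ univ.erase (0 : Fin (d+2)), (n i : ℝ) * ((n i : ℝ) - 1) * qt 0 (n - stdE i) := by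
    rw [← Finset.add_sum_erase univ _ (mem_univ (0 : Fin (d+2)))]
    rw [if_pos rfl, mul_zero, zero_add]
    exact Finset.sum_congr rfl fun i hi => by rw [if_neg (Finset.mem_erase.mp hi).1]
  have inner : ∀ i : Fin (d+2),
      (∑ j, (n i : ℝ) * θ * P j i * (if i ≠ 0 ∧ j = 0 then qt 0 (n - stdE i + stdE j) else 0))
      = (n i : ℝ) * θ * P 0 i * (if i ≠ 0 then qt 0 (n - stdE i + stdE (0 : Fin (d+2))) else 0) := by
    intro i
    rw [Finset.sum_eq_single (0 : Fin (d+2))]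
    · simp
    · intro j _ hj0
      rw [if_neg (by simp [hj0])]
      rw [mul_zero]
    · intro h; exact absurd (mem_univ _) h
  have e2 : (∑ i, ∑ j, (n i : ℝ) * θ * P j i *
        (if i ≠ 0 ∧ j = 0 then qt 0 (n - stdE i + stdE j) else 0))
      = ∑ i ∈ univ.erase (0 : Fin (d+2)),
          (n i : ℝ) * θ * P 0 i * qt 0 (n - stdE i) := by
    rw [Finset.sum_congr rfl fun i _ => inner i]
    rw [← Finset.add_sum_erase univ _ (mem_univ (0 : Fin (d+2)))]
    rw [if_neg (by simp), mul_zero, zero_add]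
    refine Finset.sum_congr rfl fun i hi => ?_
    have hi0 := (Finset.mem_erase.mp hi).1
    rw [if_pos hi0]
    congr 1
    by_cases hni : 1 ≤ n i
    · exact stepB hq hqt _ (natvec_sub n hn i hni)
    · rw [hqt.2.2.1 0 _ ⟨i, by simp [stdE, hi0]; omega⟩,
        hqt.2.2.1 0 _ ⟨i, by simp [stdE]; omega⟩]
  rw [e1, e2] at hval
  rw [hval, ← Finset.sum_add_distrib]
  exact Finset.sum_congr rfl fun i _ => by ring
end Aux


def Fprod {d : ℕ} (θ : ℝ) (P : Fin (d + 2) → Fin (d + 2) → ℝ) (n : Fin (d+2) → ℤ) : ℝ :=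
  ∏ i ∈ univ.erase (0 : Fin (d+2)), ∏ l ∈ Finset.range (n i).toNat, ((l : ℝ) + θ * P 0 i)

section Aux
variable {d : ℕ} {θ : ℝ} {P : Fin (d + 2) → Fin (d + 2) → ℝ}
  {q : ℝ → (Fin (d + 2) → ℤ) → ℝ} {qt : ℕ → (Fin (d + 2) → ℤ) → ℝ}

lemma Fpos (hθ : 0 < θ) (hP1pos : ∀ i : Fin (d + 2), i ≠ 0 → 0 < P 0 i)
    (n : Fin (d+2) → ℤ) : 0 < Fprod θ P n := by
  refine Finset.prod_pos fun i hi => Finset.prod_pos fun l _ => ?_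
  have := hP1pos i (Finset.mem_erase.mp hi).1
  positivity

lemma F_congr (n n' : Fin (d+2) → ℤ) (h : ∀ j, j ≠ 0 → n' j = n j) :
    Fprod θ P n' = Fprod θ P n :=
  Finset.prod_congr rfl fun j hj => by rw [h j (Finset.mem_erase.mp hj).1]

lemma F_succ (i : Fin (d+2)) (hi : i ≠ 0) (n : Fin (d+2) → ℤ) (h : 0 ≤ n i) :
    Fprod θ P (n + stdE i) = Fprod θ P n * ((n i : ℝ) + θ * P 0 i) := by
  unfold Fprod
  have hmem : i ∈ univ.erase (0 : Fin (d+2)) := by simp [hi]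
  rw [← Finset.mul_prod_erase _ _ hmem, ← Finset.mul_prod_erase _
    (fun j => ∏ l ∈ Finset.range (n j).toNat, ((l : ℝ) + θ * P 0 j)) hmem]
  have h1 : ((n + stdE i) i).toNat = (n i).toNat + 1 := by simp [stdE]; omega
  have h2 : ((n i).toNat : ℝ) = (n i : ℝ) := by
    rw [← Int.cast_natCast, Int.toNat_of_nonneg h]
  rw [h1, Finset.prod_range_succ, h2]
  have h3 : ∏ j ∈ (univ.erase (0 : Fin (d+2))).erase i,
      ∏ l ∈ Finset.range ((n + stdE i) j).toNat, ((l : ℝ) + θ * P 0 j)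
      = ∏ j ∈ (univ.erase (0 : Fin (d+2))).erase i,
      ∏ l ∈ Finset.range (n j).toNat, ((l : ℝ) + θ * P 0 j) := by
    refine Finset.prod_congr rfl fun j hj => ?_
    have hji : j ≠ i := (Finset.mem_erase.mp hj).1
    congr 2
    simp [stdE, hji]
  rw [h3]; ring

lemma tot_sub_eq (n : Fin (d+2) → ℤ) :
    tot n - n 0 = ∑ i ∈ univ.erase (0 : Fin (d+2)), n i := by
  rw [tot, ← Finset.add_sum_erase univ n (mem_univ (0 : Fin (d+2)))]; ring

lemma baseq (hq : IsSamplingFamily θ P q) (hqt : IsExpansionCoeffs q qt) :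
    ∀ k : ℕ, ∀ n : Fin (d+2) → ℤ, IsNatVec n → (∀ i, i ≠ 0 → n i = 0) →
      (n 0).toNat = k → qt 0 n = 1 := by
  intro k
  induction k with
  | zero =>
    intro n hn h0 hk
    have hzero : n = 0 := by
      funext j
      by_cases hj : j = 0
      · subst hj; have := hn 0; simp; omega
      · simpa using h0 j hj
    rw [hzero]; exact hqt.1
  | succ k ih =>
    intro n hn h0 hk
    have hpos : 1 ≤ n 0 := by omega
    have hsub := natvec_sub n hn 0 hpos
    have heq : (n - stdE (0 : Fin (d+2))) + stdE (0 : Fin (d+2)) = n := sub_add_cancel n _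
    have hB := stepB hq hqt (n - stdE (0 : Fin (d+2))) hsub
    rw [heq] at hB
    rw [hB]
    refine ih _ hsub (fun i hi => ?_) (by simp [stdE]; omega)
    simp only [Pi.sub_apply, stdE, if_neg hi, sub_zero]
    exact h0 i hi

lemma keyD (hq : IsSamplingFamily θ P q) (hqt : IsExpansionCoeffs q qt) :
    ∀ N : ℕ, ∀ n : Fin (d+2) → ℤ, IsNatVec n → tot n - n 0 = (N : ℤ) →
      qt 0 n = Fprod θ P n := by
  intro N
  induction N with
  | zero =>
    intro n hn hN
    have h0 : ∀ i, i ≠ (0 : Fin (d+2)) → n i = 0 := by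
      intro i hi
      have hsum : ∑ j ∈ univ.erase (0 : Fin (d+2)), n j = 0 := by
        rw [← tot_sub_eq]; omega
      have := (Finset.sum_eq_zero_iff_of_nonneg (fun j _ => hn j)).mp hsum i (by simp [hi])
      exact this
    rw [baseq hq hqt (n 0).toNat n hn h0 rfl]
    unfold Fprod
    rw [Finset.prod_congr rfl fun i hi => ?_]
    · rw [Finset.prod_const_one]
    · rw [h0 i (Finset.mem_erase.mp hi).1]
      simp
  | succ N ih =>
    intro n hn hN
    have hs : 1 ≤ tot n - n 0 := by omega
    have hC := stepC hq hqt n hn hs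
    have hterm : ∀ i ∈ univ.erase (0 : Fin (d+2)),
        (n i : ℝ) * ((n i : ℝ) - 1 + θ * P 0 i) * qt 0 (n - stdE i)
          = (n i : ℝ) * Fprod θ P n := by
      intro i hi
      have hi0 := (Finset.mem_erase.mp hi).1
      by_cases hni : 1 ≤ n i
      · have hsub := natvec_sub n hn i hni
        have htot : tot (n - stdE i) - (n - stdE i) 0 = (N : ℤ) := by
          rw [my_tot_sub]
          simp only [Pi.sub_apply, stdE, if_neg (Ne.symm hi0), sub_zero]
          omega
        have hIH := ih _ hsub htot
        rw [hIH]
        have hF : Fprod θ P n = Fprod θ P (n - stdE i) * (((n - stdE i) i : ℝ) + θ * P 0 i) := by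
          have := F_succ (θ := θ) (P := P) i hi0 (n - stdE i) (by simp [stdE]; omega)
          rw [sub_add_cancel] at this
          exact this
        rw [hF]
        have hval : ((n - stdE i) i : ℝ) = (n i : ℝ) - 1 := by
          simp [stdE]
        rw [hval]; ring
      · have : n i = 0 := by have := hn i; omega
        rw [this]
        simp
    rw [Finset.sum_congr rfl hterm, ← Finset.sum_mul] at hC
    have hcast : ∑ i ∈ univ.erase (0 : Fin (d+2)), (n i : ℝ) = (tot n : ℝ) - (n 0 : ℝ) := by
      rw [← Int.cast_sub, tot_sub_eq]
      push_cast
      rfl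
    rw [hcast] at hC
    have hne : (tot n : ℝ) - (n 0 : ℝ) ≠ 0 := by
      have : ((tot n - n 0 : ℤ) : ℝ) = (tot n : ℝ) - (n 0 : ℝ) := by push_cast; ring
      rw [← this]
      exact_mod_cast (by omega : (tot n - n 0 : ℤ) ≠ 0)
    exact mul_left_cancel₀ hne hC
end Aux


/-- **Leading-order asymptotics of ratios of sampling probabilities** (rates of the
reduced conditional ASG under strong selection): assuming `P_{1i} > 0` for `i = 2,…,d`,
for every `m ∈ ℕ^d ∖ {0}`, as `σ → ∞`:
(i) if `m_1 ≥ 1` then `q^{(σ)}(m-e_1)/q^{(σ)}(m) → 1`;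
(ii) for `i = 2,…,d` with `m_i ≥ 1`,
`σ^{-1} q^{(σ)}(m-e_i)/q^{(σ)}(m) → 1/(m_i-1+θP_{1i})`;
(iii) for `i = 2,…,d`, `σ q^{(σ)}(m+e_i)/q^{(σ)}(m) → m_i+θP_{1i}`. -/
theorem ratio_asymptotics {d : ℕ} (θ : ℝ) (hθ : 0 < θ)
    (P : Fin (d + 2) → Fin (d + 2) → ℝ)
    (hPnonneg : ∀ i j, 0 ≤ P i j) (hProw : ∀ i, ∑ j, P i j = 1)
    (hP1pos : ∀ i : Fin (d + 2), i ≠ 0 → 0 < P 0 i)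
    (q : ℝ → (Fin (d + 2) → ℤ) → ℝ) (qt : ℕ → (Fin (d + 2) → ℤ) → ℝ)
    (hq : IsSamplingFamily θ P q) (hqt : IsExpansionCoeffs q qt)
    (m : Fin (d + 2) → ℤ) (hm : IsNatVec m) (hm0 : m ≠ 0) :
    (1 ≤ m 0 →
      Tendsto (fun σ : ℝ => q σ (m - stdE 0) / q σ m) atTop (nhds 1)) ∧
    (∀ i : Fin (d + 2), i ≠ 0 → 1 ≤ m i →
      Tendsto (fun σ : ℝ => σ⁻¹ * q σ (m - stdE i) / q σ m) atTop
        (nhds (1 / ((m i : ℝ) - 1 + θ * P 0 i)))) ∧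
    (∀ i : Fin (d + 2), i ≠ 0 →
      Tendsto (fun σ : ℝ => σ * q σ (m + stdE i) / q σ m) atTop
        (nhds ((m i : ℝ) + θ * P 0 i))) := by
  have qt0_eq : ∀ n : Fin (d+2) → ℤ, IsNatVec n → qt 0 n = Fprod θ P n := by
    intro n hn
    have hnn : 0 ≤ tot n - n 0 := by
      rw [tot_sub_eq]; exact Finset.sum_nonneg fun i _ => hn i
    exact keyD hq hqt (tot n - n 0).toNat n hn (by omega)
  have hFm : 0 < Fprod θ P m := Fpos hθ hP1pos m
  have hlim_m := limA hqt m hm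
  rw [qt0_eq m hm] at hlim_m
  refine ⟨?_, ?_, ?_⟩
  · -- part (i)
    intro h1
    have hsub := natvec_sub m hm 0 h1
    have hE : tot (m - stdE (0 : Fin (d+2))) - (m - stdE (0 : Fin (d+2))) 0
        = tot m - m 0 := by
      rw [my_tot_sub]; simp [stdE]
    have hnum := limA hqt _ hsub
    rw [hE, qt0_eq _ hsub,
      F_congr (θ := θ) (P := P) m (m - stdE 0) (fun j hj => by simp [stdE, hj])] at hnum
    have hdiv := hnum.div hlim_m (ne_of_gt hFm)
    rw [div_self (ne_of_gt hFm)] at hdiv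
    refine hdiv.congr' ?_
    filter_upwards [eventually_ge_atTop 1] with σ hσ
    have hσ0 : σ ≠ 0 := by positivity
    exact mul_div_mul_left _ _ (zpow_ne_zero _ hσ0)
  · -- part (ii)
    intro i hi hmi
    have hsub := natvec_sub m hm i hmi
    have hnum := limB hq hqt m hm i hi
    rw [qt0_eq _ hsub] at hnum
    have hFeq : Fprod θ P m = Fprod θ P (m - stdE i) * ((m i : ℝ) - 1 + θ * P 0 i) := by
      have h := F_succ (θ := θ) (P := P) i hi (m - stdE i) (by simp [stdE]; omega)
      rw [sub_add_cancel] at h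
      have hval : (((m - stdE i) i : ℤ) : ℝ) = (m i : ℝ) - 1 := by simp [stdE]
      rw [hval] at h
      exact h
    have hdiv := hnum.div hlim_m (ne_of_gt hFm)
    have hFsub := Fpos (θ := θ) (P := P) hθ hP1pos (m - stdE i)
    have hratio : Fprod θ P (m - stdE i) / Fprod θ P m
        = 1 / ((m i : ℝ) - 1 + θ * P 0 i) := by
      rw [hFeq]
      have := mul_div_mul_left (1 : ℝ) ((m i : ℝ) - 1 + θ * P 0 i) (ne_of_gt hFsub)
      rw [mul_one] at this
      exact this
    rw [hratio] at hdiv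
    refine hdiv.congr' ?_
    filter_upwards [eventually_ge_atTop 1] with σ hσ
    have hσ0 : σ ≠ 0 := by positivity
    simp only [Pi.div_apply]
    rw [zpow_sub_one₀ hσ0, mul_assoc]
    exact mul_div_mul_left _ _ (zpow_ne_zero _ hσ0)
  · -- part (iii)
    intro i hi
    have hadd := natvec_add m hm i
    have hnum := limA hqt _ hadd
    have hE : tot (m + stdE i) - (m + stdE i) 0 = tot m - m 0 + 1 := by
      rw [my_tot_add]; simp [stdE, Ne.symm hi]; omega
    rw [hE, qt0_eq _ hadd, F_succ (θ := θ) (P := P) i hi m (hm i)] at hnum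
    have hdiv := hnum.div hlim_m (ne_of_gt hFm)
    rw [mul_comm (Fprod θ P m), mul_div_assoc, div_self (ne_of_gt hFm), mul_one] at hdiv
    refine hdiv.congr' ?_
    filter_upwards [eventually_ge_atTop 1] with σ hσ
    have hσ0 : σ ≠ 0 := by positivity
    simp only [Pi.div_apply]
    rw [zpow_add_one₀ hσ0, mul_assoc]
    exact mul_div_mul_left _ _ (zpow_ne_zero _ hσ0)
end
end
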